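/- arXiv:2311.17714 — 5 statements merged into one kernel-verified Lean document; each statement's English description precedes it below -/
import Mathlib

section
/- Let $g(x) = (\sin(\pi|x|) - \pi(|x|-1)\cos(\pi x))/(2\pi)$ for $|x| \le 1$ and $g(x)=0$ otherwise. Then $g$ is even, non-negative, supported in $[-1,1]$, $g(0) = 1/2$, and its Fourier transform $\hat g(t) = \int_{\mathbb{R}} g(x) e^{-2i\pi x t}\,dx$ equals $\left(\frac{2}{\pi}\frac{\cos \pi t}{1-4t^2}\right)^2$ (with the value $1/4$ at $t = \pm 1/2$). -/
set_option maxHeartbeats 1000000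

open Real MeasureTheory intervalIntegral

lemma aux1 (k : ℝ) (hk : k ≠ 0) : ∫ x in (0:ℝ)..1, Real.sin (k*x) = (1 - Real.cos k)/k := by
  have := intervalIntegral.integral_comp_mul_left (a := (0:ℝ)) (b := 1) (fun x => Real.sin x) (c := k) hk
  simp only [mul_zero, mul_one] at this
  rw [this, integral_sin]
  simp [Real.cos_zero]
  ring


lemma aux2 (k : ℝ) (hk : k ≠ 0) :
    ∫ x in (0:ℝ)..1, (1-x) * Real.cos (k*x) = (1 - Real.cos k)/k^2 := by
  have h : ∀ x ∈ Set.uIcc (0:ℝ) 1, HasDerivAt (fun x => (1-x) * Real.sin (k*x)/k - Real.cos (k*x)/k^2)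
      ((1-x) * Real.cos (k*x)) x := by
    intro x _
    have h1 : HasDerivAt (fun x : ℝ => k * x) k x := by
      simpa using (hasDerivAt_id x).const_mul k
    have h2 : HasDerivAt (fun x => (1-x) * Real.sin (k*x)/k - Real.cos (k*x)/k^2)
        ((((0-1) * Real.sin (k*x) + (1-x) * (Real.cos (k*x) * k)))/k - (-Real.sin (k*x) * k)/k^2) x := by
      exact (((((hasDerivAt_const x (1:ℝ)).sub (hasDerivAt_id x)).mul h1.sin).div_const k).sub
        (h1.cos.div_const (k^2)))
    convert h2 using 1
    field_simp
    ring
  rw [intervalIntegral.integral_eq_sub_of_hasDerivAt h (by apply Continuous.intervalIntegrable; continuity)]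
  simp [Real.cos_zero, Real.sin_zero]
  field_simp
  ring


lemma phi_nonneg (u : ℝ) (h0 : 0 ≤ u) (h1 : u ≤ 1) :
    0 ≤ Real.sin (π*u) + π*(1-u)*Real.cos (π*u) := by
  rcases le_or_gt u (1/2) with hu | hu
  · have hs : 0 ≤ Real.sin (π*u) :=
      Real.sin_nonneg_of_nonneg_of_le_pi (by positivity) (by nlinarith [Real.pi_pos])
    have hc : 0 ≤ Real.cos (π*u) :=
      Real.cos_nonneg_of_mem_Icc ⟨by nlinarith [Real.pi_pos], by nlinarith [Real.pi_pos]⟩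
    have : 0 ≤ π*(1-u) := by nlinarith [Real.pi_pos]
    nlinarith
  · set v := 1 - u with hv
    have hv0 : 0 ≤ v := by simp [hv]; linarith
    have hv2 : v < 1/2 := by simp [hv]; linarith
    have hpu : π * u = π - π * v := by rw [hv]; ring
    rw [hpu, Real.sin_pi_sub, Real.cos_pi_sub]
    rcases eq_or_lt_of_le hv0 with h | h
    · simp [← h]
    · have hx0 : 0 < π * v := by positivity
      have hx2 : π * v < π/2 := by nlinarith [Real.pi_pos]
      have hc : 0 < Real.cos (π*v) := Real.cos_pos_of_mem_Ioo ⟨by linarith [Real.pi_pos, hx0], hx2⟩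
      have ht := Real.lt_tan hx0 hx2
      rw [Real.tan_eq_sin_div_cos] at ht
      have : π * v * Real.cos (π*v) < Real.sin (π*v) := by
        rw [lt_div_iff₀ hc] at ht; linarith
      nlinarith


lemma phi_int (t : ℝ) (h : 1 - 4 * t ^ 2 ≠ 0) :
    ∫ x in (0:ℝ)..1, (Real.sin (π*x) + π*(1-x)*Real.cos (π*x)) * Real.cos (2*π*t*x)
      = 4 * Real.cos (π*t)^2 / (π * (1-4*t^2)^2) := by
  have hπ := Real.pi_pos
  have h1 : (1:ℝ) + 2*t ≠ 0 := fun h1 => h (by nlinarith)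
  have h2 : (1:ℝ) - 2*t ≠ 0 := fun h2 => h (by nlinarith)
  set p : ℝ := π*(1+2*t) with hp
  set q : ℝ := π*(1-2*t) with hq
  have hp0 : p ≠ 0 := by rw [hp]; exact mul_ne_zero (ne_of_gt hπ) h1
  have hq0 : q ≠ 0 := by rw [hq]; exact mul_ne_zero (ne_of_gt hπ) h2
  have key : ∀ x : ℝ, (Real.sin (π*x) + π*(1-x)*Real.cos (π*x)) * Real.cos (2*π*t*x)
      = (1/2) * Real.sin (p*x) + (1/2) * Real.sin (q*x)
        + (π/2) * ((1-x) * Real.cos (p*x)) + (π/2) * ((1-x) * Real.cos (q*x)) := by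
    intro x
    have e1 : p*x = π*x + 2*π*t*x := by rw [hp]; ring
    have e2 : q*x = π*x - 2*π*t*x := by rw [hq]; ring
    rw [e1, e2, Real.sin_add, Real.sin_sub, Real.cos_add, Real.cos_sub]
    ring
  rw [intervalIntegral.integral_congr (g := fun x => (1/2) * Real.sin (p*x) + (1/2) * Real.sin (q*x)
        + (π/2) * ((1-x) * Real.cos (p*x)) + (π/2) * ((1-x) * Real.cos (q*x)))
      (fun x _ => key x)]
  have i1 : IntervalIntegrable (fun x => (1/2) * Real.sin (p*x)) volume 0 1 := by
    apply Continuous.intervalIntegrable; fun_prop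
  have i2 : IntervalIntegrable (fun x => (1/2) * Real.sin (q*x)) volume 0 1 := by
    apply Continuous.intervalIntegrable; fun_prop
  have i3 : IntervalIntegrable (fun x => (π/2) * ((1-x) * Real.cos (p*x))) volume 0 1 := by
    apply Continuous.intervalIntegrable; fun_prop
  have i4 : IntervalIntegrable (fun x => (π/2) * ((1-x) * Real.cos (q*x))) volume 0 1 := by
    apply Continuous.intervalIntegrable; fun_prop
  rw [intervalIntegral.integral_add (((i1.add i2).add i3)) i4,
      intervalIntegral.integral_add (i1.add i2) i3,
      intervalIntegral.integral_add i1 i2,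
      intervalIntegral.integral_const_mul, intervalIntegral.integral_const_mul,
      intervalIntegral.integral_const_mul, intervalIntegral.integral_const_mul,
      aux1 p hp0, aux1 q hq0, aux2 p hp0, aux2 q hq0]
  have hcp : Real.cos p = -Real.cos (2*π*t) := by
    rw [hp, show π*(1+2*t) = π - (-(2*π*t)) by ring, Real.cos_pi_sub, Real.cos_neg]
  have hcq : Real.cos q = -Real.cos (2*π*t) := by
    rw [hq, show π*(1-2*t) = π - 2*π*t by ring, Real.cos_pi_sub]
  have hsq : 1 + Real.cos (2*π*t) = 2 * Real.cos (π*t)^2 := by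
    rw [show 2*π*t = 2*(π*t) by ring, Real.cos_two_mul]; ring
  rw [hcp, hcq]
  have e : p = π*(1+2*t) := hp
  have e' : q = π*(1-2*t) := hq
  have hc2 : Real.cos (π*t)^2 = (1 + Real.cos (2*π*t))/2 := by linarith [hsq]
  rw [e, e', hc2, show (1-4*t^2:ℝ) = (1+2*t)*(1-2*t) by ring]
  field_simp
  ring


lemma phi_int_half :
    ∫ x in (0:ℝ)..1, (Real.sin (π*x) + π*(1-x)*Real.cos (π*x)) * Real.cos (π*x) = π/4 := by
  have hπ := Real.pi_pos
  have key : ∀ x : ℝ, (Real.sin (π*x) + π*(1-x)*Real.cos (π*x)) * Real.cos (π*x)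
      = (1/2) * Real.sin (2*π*x) + (π/2) * (1-x) + (π/2) * ((1-x) * Real.cos (2*π*x)) := by
    intro x
    have h1 : Real.sin (2*π*x) = 2 * Real.sin (π*x) * Real.cos (π*x) := by
      rw [show 2*π*x = 2*(π*x) by ring, Real.sin_two_mul]
    have h2 : Real.cos (2*π*x) = 2 * Real.cos (π*x)^2 - 1 := by
      rw [show 2*π*x = 2*(π*x) by ring, Real.cos_two_mul]
    rw [h1, h2]; ring
  rw [intervalIntegral.integral_congr (fun x _ => key x)]
  have i1 : IntervalIntegrable (fun x => (1/2) * Real.sin (2*π*x)) volume 0 1 := by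
    apply Continuous.intervalIntegrable; fun_prop
  have i2 : IntervalIntegrable (fun x : ℝ => (π/2) * (1-x)) volume 0 1 := by
    apply Continuous.intervalIntegrable; fun_prop
  have i3 : IntervalIntegrable (fun x => (π/2) * ((1-x) * Real.cos (2*π*x))) volume 0 1 := by
    apply Continuous.intervalIntegrable; fun_prop
  rw [intervalIntegral.integral_add (i1.add i2) i3, intervalIntegral.integral_add i1 i2,
      intervalIntegral.integral_const_mul, intervalIntegral.integral_const_mul,
      intervalIntegral.integral_const_mul,
      show (fun x : ℝ => Real.sin (2*π*x)) = (fun x : ℝ => Real.sin ((2*π)*x)) by funext x; ring_nf,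
      show (fun x : ℝ => (1-x) * Real.cos (2*π*x)) = (fun x : ℝ => (1-x) * Real.cos ((2*π)*x)) by
        funext x; ring_nf,
      aux1 (2*π) (by positivity), aux2 (2*π) (by positivity)]
  have h5 : ∫ x in (0:ℝ)..1, (1-x) = 1/2 := by
    have : ∫ x in (0:ℝ)..1, (1-x) = (∫ _x in (0:ℝ)..1, (1:ℝ)) - ∫ x in (0:ℝ)..1, x := by
      rw [← intervalIntegral.integral_sub] <;>
        first
          | rfl
          | (apply Continuous.intervalIntegrable; fun_prop)
    rw [this, integral_id]; norm_num
  rw [h5, Real.cos_two_pi]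
  field_simp
  norm_num
  ring


lemma reduce (g : ℝ → ℝ)
    (hg : ∀ x : ℝ, g x =
      if |x| ≤ 1 then (Real.sin (π * |x|) - π * (|x| - 1) * Real.cos (π * x)) / (2 * π)
      else 0) (t : ℝ) :
    ∫ x : ℝ, (g x : ℂ) * Complex.exp (-(2 * π * Complex.I * x * t))
      = (((1/π) * ∫ x in (0:ℝ)..1,
          (Real.sin (π*x) + π*(1-x)*Real.cos (π*x)) * Real.cos (2*π*t*x) : ℝ) : ℂ) := by
  have hπ := Real.pi_pos
  set ψ : ℝ → ℝ := fun x => (Real.sin (π*|x|) - π*(|x|-1)*Real.cos (π*x))/(2*π) with hψ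
  have hψc : Continuous ψ := by fun_prop
  set u : ℝ → ℝ := fun x => ψ x * Real.cos (2*π*t*x) with hu
  set v : ℝ → ℝ := fun x => ψ x * Real.sin (2*π*t*x) with hv
  have huc : Continuous u := by fun_prop
  have hvc : Continuous v := by fun_prop
  have hexp : ∀ x : ℝ, Complex.exp (-(2*(π:ℂ)*Complex.I*x*t))
      = ((Real.cos (2*π*t*x) : ℝ) : ℂ) - ((Real.sin (2*π*t*x) : ℝ) : ℂ) * Complex.I := by
    intro x
    rw [show -(2*(π:ℂ)*Complex.I*x*t) = ((-(2*π*t*x) : ℝ) : ℂ) * Complex.I by push_cast; ring,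
        Complex.exp_mul_I, ← Complex.ofReal_cos, ← Complex.ofReal_sin, Real.cos_neg, Real.sin_neg]
    push_cast; ring
  have hfun : (fun x : ℝ => (g x : ℂ) * Complex.exp (-(2 * π * Complex.I * x * t)))
      = Set.indicator (Set.Icc (-1:ℝ) 1) (fun x => ((u x : ℝ) : ℂ) - ((v x : ℝ) : ℂ) * Complex.I) := by
    funext x
    rw [hg x, Set.indicator_apply]
    have hmem : x ∈ Set.Icc (-1:ℝ) 1 ↔ |x| ≤ 1 := by rw [Set.mem_Icc, abs_le]
    by_cases hx : |x| ≤ 1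
    · rw [if_pos hx, if_pos (hmem.mpr hx), hexp x, hu, hv, hψ]
      push_cast; ring
    · rw [if_neg hx, if_neg (fun h => hx (hmem.mp h))]; simp
  rw [hfun, MeasureTheory.integral_indicator measurableSet_Icc]
  have hui : IntegrableOn (fun x => ((u x : ℝ) : ℂ)) (Set.Icc (-1:ℝ) 1) volume :=
    (huc.integrableOn_Icc).ofReal
  have hvi : IntegrableOn (fun x => ((v x : ℝ) : ℂ) * Complex.I) (Set.Icc (-1:ℝ) 1) volume :=
    (hvc.integrableOn_Icc).ofReal.mul_const _
  rw [MeasureTheory.integral_sub hui hvi, MeasureTheory.integral_mul_const,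
      show (∫ x in Set.Icc (-1:ℝ) 1, ((u x : ℝ) : ℂ)) = ((∫ x in Set.Icc (-1:ℝ) 1, u x : ℝ) : ℂ) from
        integral_ofReal,
      show (∫ x in Set.Icc (-1:ℝ) 1, ((v x : ℝ) : ℂ)) = ((∫ x in Set.Icc (-1:ℝ) 1, v x : ℝ) : ℂ) from
        integral_ofReal]
  have icc_ii : ∀ f : ℝ → ℝ, Continuous f →
      ∫ x in Set.Icc (-1:ℝ) 1, f x = ∫ x in (-1:ℝ)..1, f x := by
    intro f _
    rw [MeasureTheory.integral_Icc_eq_integral_Ioc, ← intervalIntegral.integral_of_le (by norm_num)]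
  have hψeven : ∀ x : ℝ, ψ (-x) = ψ x := by
    intro x
    rw [hψ]
    simp only [abs_neg]
    rw [show π * -x = -(π*x) by ring, Real.cos_neg]
  have hvzero : ∫ x in Set.Icc (-1:ℝ) 1, v x = 0 := by
    rw [icc_ii v hvc,
        ← intervalIntegral.integral_add_adjacent_intervals (b := (0:ℝ))
          (hvc.intervalIntegrable _ _) (hvc.intervalIntegrable _ _)]
    have : ∫ x in (-1:ℝ)..0, v x = ∫ x in (0:ℝ)..1, v (-x) := by
      rw [intervalIntegral.integral_comp_neg]; norm_num
    rw [this]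
    have hodd : ∀ x : ℝ, v (-x) = - v x := by
      intro x
      rw [hv]; simp only
      rw [hψeven x, show 2*π*t*(-x) = -(2*π*t*x) by ring, Real.sin_neg]; ring
    rw [intervalIntegral.integral_congr (fun x _ => hodd x), intervalIntegral.integral_neg]
    ring
  have hueven : ∫ x in Set.Icc (-1:ℝ) 1, u x = 2 * ∫ x in (0:ℝ)..1, u x := by
    rw [icc_ii u huc,
        ← intervalIntegral.integral_add_adjacent_intervals (b := (0:ℝ))
          (huc.intervalIntegrable _ _) (huc.intervalIntegrable _ _)]
    have : ∫ x in (-1:ℝ)..0, u x = ∫ x in (0:ℝ)..1, u (-x) := by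
      rw [intervalIntegral.integral_comp_neg]; norm_num
    rw [this]
    have heven : ∀ x : ℝ, u (-x) = u x := by
      intro x
      rw [hu]; simp only
      rw [hψeven x, show 2*π*t*(-x) = -(2*π*t*x) by ring, Real.cos_neg]
    rw [intervalIntegral.integral_congr (fun x _ => heven x)]
    ring
  have hcongr : ∫ x in (0:ℝ)..1, u x
      = (1/(2*π)) * ∫ x in (0:ℝ)..1, (Real.sin (π*x) + π*(1-x)*Real.cos (π*x)) * Real.cos (2*π*t*x) := by
    rw [← intervalIntegral.integral_const_mul]
    apply intervalIntegral.integral_congr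
    intro x hx
    rw [Set.uIcc_of_le (by norm_num : (0:ℝ) ≤ 1), Set.mem_Icc] at hx
    rw [hu, hψ]; simp only
    rw [abs_of_nonneg hx.1]
    ring
  rw [hvzero, hueven, hcongr]
  push_cast
  ring


theorem stmt_0 (g : ℝ → ℝ)
    (hg : ∀ x : ℝ, g x =
      if |x| ≤ 1 then (Real.sin (π * |x|) - π * (|x| - 1) * Real.cos (π * x)) / (2 * π)
      else 0) :
    (∀ x : ℝ, g (-x) = g x) ∧
    (∀ x : ℝ, 0 ≤ g x) ∧
    (∀ x : ℝ, 1 < |x| → g x = 0) ∧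
    g 0 = 1 / 2 ∧
    (∀ t : ℝ, 1 - 4 * t ^ 2 ≠ 0 →
      ∫ x : ℝ, (g x : ℂ) * Complex.exp (-(2 * π * Complex.I * x * t))
        = ((2 / π * (Real.cos (π * t) / (1 - 4 * t ^ 2))) ^ 2 : ℝ)) ∧
    (∀ t : ℝ, t = 1 / 2 ∨ t = -(1 / 2) →
      ∫ x : ℝ, (g x : ℂ) * Complex.exp (-(2 * π * Complex.I * x * t)) = 1 / 4) := by
  have hπ := Real.pi_pos
  refine ⟨?_, ?_, ?_, ?_, ?_, ?_⟩
  · intro x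
    rw [hg (-x), hg x]
    simp only [abs_neg]
    rw [show π * -x = -(π*x) by ring, Real.cos_neg]
  · intro x
    rw [hg x]
    split_ifs with hx
    · have hcc : Real.cos (π*x) = Real.cos (π*|x|) := by
        rcases abs_cases x with ⟨h, _⟩ | ⟨h, _⟩
        · rw [h]
        · rw [h, show π * -x = -(π*x) by ring, Real.cos_neg]
      rw [hcc]
      have h0 := phi_nonneg |x| (abs_nonneg x) hx
      have : (0:ℝ) < 2*π := by positivity
      apply div_nonneg _ (le_of_lt this)
      nlinarith
    · exact le_refl 0
  · intro x hx
    rw [hg x, if_neg (not_le.mpr hx)]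
  · rw [hg 0]
    norm_num
    field_simp
  · intro t ht
    rw [reduce g hg t, phi_int t ht]
    norm_cast
    have h4 : (1 - 4*t^2) ≠ 0 := ht
    field_simp
    ring
  · intro t ht
    have hv : ∀ x : ℝ, Real.cos (2*π*t*x) = Real.cos (π*x) := by
      rcases ht with rfl | rfl
      · intro x; rw [show 2*π*(1/2)*x = π*x by ring]
      · intro x; rw [show 2*π*(-(1/2))*x = -(π*x) by ring, Real.cos_neg]
    rw [reduce g hg t]
    have : ∫ x in (0:ℝ)..1, (Real.sin (π*x) + π*(1-x)*Real.cos (π*x)) * Real.cos (2*π*t*x)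
        = ∫ x in (0:ℝ)..1, (Real.sin (π*x) + π*(1-x)*Real.cos (π*x)) * Real.cos (π*x) :=
      intervalIntegral.integral_congr (fun x _ => by rw [hv x])
    rw [this, phi_int_half]
    rw [show (1/π) * (π/4) = 1/4 by field_simp]
    norm_num
end

section
/- Let $T > 0$, $(\lambda_k)_{k\in\mathbb{Z}}$ real numbers with $\lambda_{k+1}-\lambda_k \ge 1$, and $(a_k)$ a finitely supported complex sequence. Then $\frac{1}{T}\int_{-T/2}^{T/2} \left|\sum_k a_k e^{2i\pi\lambda_k t}\right|^2 dt \le 2\frac{T+1}{T} \sum_k |a_k|^2$. -/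
open Real MeasureTheory Finset


lemma tri_cos (L b : ℝ) (hL : 0 < L) (hb : b ≠ 0) :
    ∫ t in (0:ℝ)..L, (1 - t/L) * Real.cos (b*t) = (1 - Real.cos (b*L)) / (L*b^2) := by
  have key : ∀ t ∈ Set.uIcc (0:ℝ) L,
      HasDerivAt (fun t => (1 - t/L) * Real.sin (b*t)/b - Real.cos (b*t)/(L*b^2))
        ((1 - t/L) * Real.cos (b*t)) t := by
    intro t _
    have h1 : HasDerivAt (fun t : ℝ => 1 - t/L) (-(1/L)) t := by
      simpa using ((hasDerivAt_id t).div_const L).const_sub 1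
    have h2 : HasDerivAt (fun t : ℝ => Real.sin (b*t)) (Real.cos (b*t) * b) t := by
      simpa [mul_comm, Function.comp_def] using (Real.hasDerivAt_sin (b*t)).comp t ((hasDerivAt_id t).const_mul b)
    have h3 : HasDerivAt (fun t : ℝ => Real.cos (b*t)) (-Real.sin (b*t) * b) t := by
      simpa [mul_comm, Function.comp_def] using (Real.hasDerivAt_cos (b*t)).comp t ((hasDerivAt_id t).const_mul b)
    have := ((h1.mul h2).div_const b).sub (h3.div_const (L*b^2))
    refine this.congr_deriv ?_
    field_simp
    ring
  rw [intervalIntegral.integral_eq_sub_of_hasDerivAt key]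
  · simp
    field_simp
    ring
  · exact (Continuous.intervalIntegrable (by continuity) _ _)

lemma half_eq (L : ℝ) (hL : 0 < L) (g : ℝ → ℝ) :
    ∫ t in (0:ℝ)..L, (2*(1 - |t|/L) * g t) = ∫ t in (0:ℝ)..L, (2*(1 - t/L) * g t) := by
  apply intervalIntegral.integral_congr
  intro t ht
  rw [Set.uIcc_of_le hL.le] at ht
  simp only [abs_of_nonneg ht.1]

lemma w_split (L : ℝ) (hL : 0 < L) (g : ℝ → ℝ) (hg : Continuous g) :
    ∫ t in (-L)..L, (2*(1 - |t|/L) * g t)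
      = (∫ t in (0:ℝ)..L, (2*(1 - |t|/L) * g (-t))) + ∫ t in (0:ℝ)..L, (2*(1 - |t|/L) * g t) := by
  have hcont : Continuous fun t : ℝ => 2*(1 - |t|/L) * g t := by continuity
  rw [← intervalIntegral.integral_add_adjacent_intervals (a := -L) (b := 0) (c := L)
    (hcont.intervalIntegrable _ _) (hcont.intervalIntegrable _ _)]
  congr 1
  have := intervalIntegral.integral_comp_neg (a := (0:ℝ)) (b := L) (fun t => 2*(1 - |t|/L) * g t)
  norm_num at this
  rw [← this]

lemma w_cos (L b : ℝ) (hL : 0 < L) (hb : b ≠ 0) :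
    ∫ t in (-L)..L, 2*(1 - |t|/L) * Real.cos (b*t)
      = 4*(1 - Real.cos (b*L)) / (L*b^2) := by
  rw [w_split L hL _ (by continuity)]
  have : ∀ t : ℝ, Real.cos (b * -t) = Real.cos (b*t) := by intro t; rw [mul_neg, Real.cos_neg]
  simp only [this]
  rw [half_eq L hL]
  have := tri_cos L b hL hb
  have h2 : ∫ t in (0:ℝ)..L, (2*(1 - t/L) * Real.cos (b*t))
      = 2 * ∫ t in (0:ℝ)..L, ((1 - t/L) * Real.cos (b*t)) := by
    rw [← intervalIntegral.integral_const_mul]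
    congr 1; ext t; ring
  rw [h2, this]; ring

lemma w_sin (L b : ℝ) (hL : 0 < L) :
    ∫ t in (-L)..L, 2*(1 - |t|/L) * Real.sin (b*t) = 0 := by
  rw [w_split L hL _ (by continuity)]
  simp only [mul_neg, Real.sin_neg, intervalIntegral.integral_neg]
  ring

lemma tri_one (L : ℝ) (hL : 0 < L) :
    ∫ t in (0:ℝ)..L, (1 - t/L) = L/2 := by
  rw [intervalIntegral.integral_sub intervalIntegrable_const
    ((Continuous.intervalIntegrable (by continuity) _ _))]
  simp [intervalIntegral.integral_div]
  field_simp
  ring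

lemma w_zero (L : ℝ) (hL : 0 < L) :
    ∫ t in (-L)..L, 2*(1 - |t|/L) * Real.cos (0*t) = 2*L := by
  rw [w_split L hL _ (by continuity)]
  simp only [zero_mul, Real.cos_zero, mul_one]
  have h3 : ∫ t in (0:ℝ)..L, 2*(1 - |t|/L) = L := by
    have : ∫ t in (0:ℝ)..L, 2*(1 - |t|/L) = ∫ t in (0:ℝ)..L, 2*(1 - t/L) := by
      apply intervalIntegral.integral_congr
      intro t ht
      rw [Set.uIcc_of_le hL.le] at ht
      simp only [abs_of_nonneg ht.1]
    rw [this, show (fun t : ℝ => 2*(1-t/L)) = (fun t : ℝ => (2:ℝ) * (1-t/L)) from rfl,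
      intervalIntegral.integral_const_mul, tri_one L hL]
    ring
  rw [h3]
  ring

lemma nat_sum_inv_sq (N : ℕ) : ∑ i ∈ Finset.range N, (1:ℝ)/((i:ℝ)+1)^2 ≤ 2 := by
  set f : ℕ → ℝ := fun i => 2 - 2/((i:ℝ)+1) with hf
  have key : ∑ i ∈ Finset.range N, (1:ℝ)/((i:ℝ)+1)^2
      ≤ ∑ i ∈ Finset.range N, (f (i+1) - f i) := by
    apply Finset.sum_le_sum
    intro i _
    have h1 : (0:ℝ) < (i:ℝ)+1 := by positivity
    have h2 : (0:ℝ) < (i:ℝ)+2 := by positivity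
    have : f (i+1) - f i = 2/((i:ℝ)+1) - 2/((i:ℝ)+2) := by
      simp only [hf]; push_cast; ring
    rw [this, div_sub_div _ _ (by positivity) (by positivity)]
    rw [div_le_div_iff₀ (by positivity) (by positivity)]
    nlinarith [sq_nonneg ((i:ℝ))]
  have tele : ∑ i ∈ Finset.range N, (f (i+1) - f i) = f N - f 0 :=
    Finset.sum_range_sub f N
  have : f N - f 0 ≤ 2 := by
    simp only [hf]
    have : (0:ℝ) ≤ 2/((N:ℝ)+1) := by positivity
    norm_num
    linarith
  linarith

set_option maxHeartbeats 1000000 in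
lemma natfin_sum_inv_sq (u : Finset ℕ) (hu : 0 ∉ u) : ∑ n ∈ u, (1:ℝ)/(n:ℝ)^2 ≤ 2 := by
  obtain ⟨N, hN⟩ : ∃ N, ∀ n ∈ u, n < N + 1 := by
    refine ⟨u.sup (fun n => n), fun n hn => ?_⟩
    have := Finset.le_sup (f := fun n => n) hn
    omega
  have hsub : u ⊆ (Finset.range N).image (fun n : ℕ => n + 1) := by
    intro n hn
    have h1 : 1 ≤ n := Nat.one_le_iff_ne_zero.mpr (fun h => hu (h ▸ hn))
    have h2 := hN n hn
    simp only [Finset.mem_image, Finset.mem_range]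
    exact ⟨n - 1, by omega, by omega⟩
  calc ∑ n ∈ u, (1:ℝ)/(n:ℝ)^2
      ≤ ∑ n ∈ (Finset.range N).image (fun n : ℕ => n + 1), (1:ℝ)/(n:ℝ)^2 :=
        Finset.sum_le_sum_of_subset_of_nonneg hsub (fun n _ _ => by positivity)
    _ = ∑ i ∈ Finset.range N, (1:ℝ)/((i:ℝ)+1)^2 := by
        rw [Finset.sum_image (g := fun n : ℕ => n + 1) (f := fun n : ℕ => (1:ℝ)/(n:ℝ)^2)
          (fun a _ b _ h => by simp only [] at h; omega)]
        apply Finset.sum_congr rfl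
        intro i _
        have : ((i:ℝ)+1) ≠ 0 := by positivity
        push_cast
        field_simp
    _ ≤ 2 := nat_sum_inv_sq N

lemma intfin_sum_inv_sq (v : Finset ℤ) (hv : (0:ℤ) ∉ v) : ∑ m ∈ v, (1:ℝ)/(m:ℝ)^2 ≤ 4 := by
  have hsplit : v = v.filter (0 < ·) ∪ v.filter (· < 0) := by
    ext m
    simp only [Finset.mem_union, Finset.mem_filter]
    constructor
    · intro hm
      rcases lt_trichotomy 0 m with h | h | h
      · exact Or.inl ⟨hm, h⟩
      · exact absurd (h ▸ hm) hv
      · exact Or.inr ⟨hm, h⟩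
    · rintro (⟨h, _⟩ | ⟨h, _⟩) <;> exact h
  have hdisj : Disjoint (v.filter (0 < ·)) (v.filter (· < 0)) := by
    apply Finset.disjoint_left.mpr
    intro m hm1 hm2
    simp only [Finset.mem_filter] at hm1 hm2
    omega
  have habs : ∀ (w : Finset ℤ), (∀ m ∈ w, m ≠ 0) →
      (∀ a ∈ w, ∀ b ∈ w, a.natAbs = b.natAbs → a = b) →
      ∑ m ∈ w, (1:ℝ)/(m:ℝ)^2 ≤ 2 := by
    intro w hw hinj
    have heq : ∑ m ∈ w, (1:ℝ)/(m:ℝ)^2 = ∑ n ∈ w.image Int.natAbs, (1:ℝ)/(n:ℝ)^2 := by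
      rw [Finset.sum_image hinj]
      apply Finset.sum_congr rfl
      intro m _
      rw [Nat.cast_natAbs, Int.cast_abs, sq_abs]
    rw [heq]
    apply natfin_sum_inv_sq
    intro h0
    obtain ⟨m, hm, hm0⟩ := Finset.mem_image.mp h0
    exact hw m hm (Int.natAbs_eq_zero.mp hm0)
  have h1 := habs (v.filter (0 < ·))
    (fun m hm => by simp only [Finset.mem_filter] at hm; omega)
    (fun a ha b hb => by
      simp only [Finset.mem_filter] at ha hb; omega)
  have h2 := habs (v.filter (· < 0))
    (fun m hm => by simp only [Finset.mem_filter] at hm; omega)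
    (fun a ha b hb => by
      simp only [Finset.mem_filter] at ha hb; omega)
  calc ∑ m ∈ v, (1:ℝ)/(m:ℝ)^2
      = (∑ m ∈ v.filter (0 < ·), (1:ℝ)/(m:ℝ)^2) + ∑ m ∈ v.filter (· < 0), (1:ℝ)/(m:ℝ)^2 := by
        rw [← Finset.sum_union hdisj, ← hsplit]
    _ ≤ 4 := by linarith

lemma expand_norm_sq (s : Finset ℤ) (a : ℤ → ℂ) (lam : ℤ → ℝ) (t : ℝ) :
    ‖∑ k ∈ s, a k * Complex.exp (2 * π * Complex.I * lam k * t)‖ ^ 2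
    = ∑ j ∈ s, ∑ k ∈ s,
        ((a j * (starRingEnd ℂ) (a k)).re * Real.cos (2*π*(lam j - lam k)*t)
          - (a j * (starRingEnd ℂ) (a k)).im * Real.sin (2*π*(lam j - lam k)*t)) := by
  have h1 : ∀ z : ℂ, ‖z‖^2 = (z * (starRingEnd ℂ) z).re := by
    intro z
    rw [Complex.mul_conj]
    simp [Complex.normSq_eq_norm_sq, ← Complex.ofReal_pow]
  rw [h1, map_sum, Finset.sum_mul_sum, Complex.re_sum]
  apply Finset.sum_congr rfl
  intro j _
  rw [Complex.re_sum]
  apply Finset.sum_congr rfl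
  intro k _
  have hconj : (starRingEnd ℂ) (Complex.exp (2 * π * Complex.I * lam k * t))
      = Complex.exp (-(2 * π * Complex.I * lam k * t)) := by
    rw [← Complex.exp_conj]
    congr 1
    simp only [map_mul, Complex.conj_I, Complex.conj_ofReal, map_ofNat]
    ring
  have hprod : Complex.exp (2 * π * Complex.I * lam j * t)
      * Complex.exp (-(2 * π * Complex.I * lam k * t))
      = Complex.exp ((2*π*(lam j - lam k)*t : ℝ) * Complex.I) := by
    rw [← Complex.exp_add]
    congr 1
    push_cast
    ring
  have key : a j * Complex.exp (2 * π * Complex.I * lam j * t)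
      * (starRingEnd ℂ) (a k * Complex.exp (2 * π * Complex.I * lam k * t))
      = (a j * (starRingEnd ℂ) (a k))
        * Complex.exp ((2*π*(lam j - lam k)*t : ℝ) * Complex.I) := by
    calc a j * Complex.exp (2 * π * Complex.I * lam j * t)
        * (starRingEnd ℂ) (a k * Complex.exp (2 * π * Complex.I * lam k * t))
        = (a j * (starRingEnd ℂ) (a k)) * (Complex.exp (2 * π * Complex.I * lam j * t)
            * Complex.exp (-(2 * π * Complex.I * lam k * t))) := by
          rw [map_mul, hconj]; ring
      _ = _ := by rw [hprod]
  rw [key, Complex.mul_re, Complex.exp_ofReal_mul_I_re, Complex.exp_ofReal_mul_I_im]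

lemma lam_gap (lam : ℤ → ℝ) (hlam : ∀ k : ℤ, lam (k + 1) - lam k ≥ 1) :
    ∀ j k : ℤ, j ≤ k → lam k - lam j ≥ (k : ℝ) - (j : ℝ) := by
  intro j
  refine fun k hk => Int.le_induction (motive := fun k _ => lam k - lam j ≥ (k : ℝ) - (j : ℝ)) ?_ ?_ k hk
  · simp
  · intro n _ ih
    have := hlam n
    push_cast
    push_cast at ih
    linarith

lemma lam_gap_sq (lam : ℤ → ℝ) (hlam : ∀ k : ℤ, lam (k + 1) - lam k ≥ 1) :
    ∀ j k : ℤ, j ≠ k → ((j:ℝ) - (k:ℝ))^2 ≤ (lam j - lam k)^2 := by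
  intro j k hjk
  rcases lt_or_gt_of_ne hjk with h | h
  · have h1 := lam_gap lam hlam j k h.le
    have h2 : (1:ℝ) ≤ (k:ℝ) - (j:ℝ) := by
      have : j + 1 ≤ k := h
      have : ((j:ℝ)+1) ≤ (k:ℝ) := by exact_mod_cast this
      linarith
    nlinarith
  · have h1 := lam_gap lam hlam k j h.le
    have h2 : (1:ℝ) ≤ (j:ℝ) - (k:ℝ) := by
      have : k + 1 ≤ j := h
      have : ((k:ℝ)+1) ≤ (j:ℝ) := by exact_mod_cast this
      linarith
    nlinarith

noncomputable def Cker (L b : ℝ) : ℝ :=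
  if b = 0 then 2*L else 4*(1 - Real.cos (b*L)) / (L*b^2)

lemma w_cos_eq (L b : ℝ) (hL : 0 < L) :
    ∫ t in (-L)..L, 2*(1 - |t|/L) * Real.cos (b*t) = Cker L b := by
  rcases eq_or_ne b 0 with hb | hb
  · subst hb
    rw [Cker, if_pos rfl]
    exact w_zero L hL
  · rw [Cker, if_neg hb]
    exact w_cos L b hL hb

lemma Cker_bound (L b : ℝ) (hL : 0 < L) (hb : b ≠ 0) : |Cker L b| ≤ 8/(L*b^2) := by
  rw [Cker, if_neg hb, abs_div, abs_of_pos (by positivity : (0:ℝ) < L*b^2)]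
  have h1 := Real.cos_le_one (b*L)
  have h2 := Real.neg_one_le_cos (b*L)
  have h3 : |4*(1 - Real.cos (b*L))| ≤ 8 := by
    rw [abs_le]; constructor <;> nlinarith
  gcongr

set_option maxHeartbeats 1600000 in
theorem stmt_2 (T : ℝ) (hT : 0 < T)
    (lam : ℤ → ℝ) (hlam : ∀ k : ℤ, lam (k + 1) - lam k ≥ 1)
    (s : Finset ℤ) (a : ℤ → ℂ) :
    (1 / T) * ∫ t in (-(T / 2))..(T / 2),
        ‖∑ k ∈ s, a k * Complex.exp (2 * π * Complex.I * lam k * t)‖ ^ 2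
      ≤ 2 * ((T + 1) / T) * ∑ k ∈ s, ‖a k‖ ^ 2 := by
  set L : ℝ := T + 1/2 with hLdef
  have hL : 0 < L := by rw [hLdef]; linarith
  set A : ℝ := ∑ k ∈ s, ‖a k‖ ^ 2 with hAdef
  have hA0 : 0 ≤ A := Finset.sum_nonneg fun k _ => by positivity
  have hfcont : Continuous (fun t : ℝ => ∑ k ∈ s, a k * Complex.exp (2 * π * Complex.I * lam k * t)) :=
    continuous_finset_sum _ fun k _ => continuous_const.mul
      (Complex.continuous_exp.comp (continuous_const.mul Complex.continuous_ofReal))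
  have hFcont : Continuous (fun t : ℝ => ‖∑ k ∈ s, a k * Complex.exp (2 * π * Complex.I * lam k * t)‖ ^ 2) :=
    hfcont.norm.pow 2
  have hF0 : ∀ t : ℝ, 0 ≤ ‖∑ k ∈ s, a k * Complex.exp (2 * π * Complex.I * lam k * t)‖ ^ 2 :=
    fun t => by positivity
  have hwcont : Continuous (fun t : ℝ => 2*(1 - |t|/L)) := by fun_prop
  have hwFcont : Continuous (fun t : ℝ => 2*(1 - |t|/L) * ‖∑ k ∈ s, a k * Complex.exp (2 * π * Complex.I * lam k * t)‖ ^ 2) :=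
    hwcont.mul hFcont
  -- Step 1: pointwise bound on the core interval
  have hpt : ∀ t ∈ Set.Icc (-(T/2)) (T/2),
      ‖∑ k ∈ s, a k * Complex.exp (2 * π * Complex.I * lam k * t)‖ ^ 2
        ≤ (2*T+1)/(2*T+2) * (2*(1 - |t|/L) * ‖∑ k ∈ s, a k * Complex.exp (2 * π * Complex.I * lam k * t)‖ ^ 2) := by
    intro t ht
    have habs : |t| ≤ T/2 := abs_le.mpr ⟨by linarith [ht.1], ht.2⟩
    have hc : 1 ≤ (2*T+1)/(2*T+2) * (2*(1 - |t|/L)) := by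
      have h1 : |t|/L ≤ T/(2*T+1) := by
        rw [div_le_div_iff₀ hL (by linarith)]
        rw [hLdef]
        nlinarith [abs_nonneg t]
      rw [div_mul_eq_mul_div, le_div_iff₀ (by linarith : (0:ℝ) < 2*T+2)]
      have h2 : (2*T+1) * (T/(2*T+1)) = T := by field_simp
      nlinarith [h1, h2, (by linarith : (0:ℝ) < 2*T+1)]
    calc ‖∑ k ∈ s, a k * Complex.exp (2 * π * Complex.I * lam k * t)‖ ^ 2
        = 1 * ‖∑ k ∈ s, a k * Complex.exp (2 * π * Complex.I * lam k * t)‖ ^ 2 := (one_mul _).symm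
      _ ≤ ((2*T+1)/(2*T+2) * (2*(1 - |t|/L))) * ‖∑ k ∈ s, a k * Complex.exp (2 * π * Complex.I * lam k * t)‖ ^ 2 :=
          mul_le_mul_of_nonneg_right hc (hF0 t)
      _ = (2*T+1)/(2*T+2) * (2*(1 - |t|/L) * ‖∑ k ∈ s, a k * Complex.exp (2 * π * Complex.I * lam k * t)‖ ^ 2) := by
          ring
  -- Step 2: monotone integral comparisons
  have h1 : (∫ t in (-(T/2))..(T/2), ‖∑ k ∈ s, a k * Complex.exp (2 * π * Complex.I * lam k * t)‖ ^ 2)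
      ≤ ∫ t in (-(T/2))..(T/2), (2*T+1)/(2*T+2) * (2*(1 - |t|/L) * ‖∑ k ∈ s, a k * Complex.exp (2 * π * Complex.I * lam k * t)‖ ^ 2) :=
    intervalIntegral.integral_mono_on (by linarith)
      (hFcont.intervalIntegrable _ _) ((continuous_const.mul hwFcont).intervalIntegrable _ _) hpt
  have h2 : (∫ t in (-(T/2))..(T/2), (2*T+1)/(2*T+2) * (2*(1 - |t|/L) * ‖∑ k ∈ s, a k * Complex.exp (2 * π * Complex.I * lam k * t)‖ ^ 2))
      = (2*T+1)/(2*T+2) * ∫ t in (-(T/2))..(T/2), 2*(1 - |t|/L) * ‖∑ k ∈ s, a k * Complex.exp (2 * π * Complex.I * lam k * t)‖ ^ 2 :=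
    intervalIntegral.integral_const_mul _ _
  have h3 : (∫ t in (-(T/2))..(T/2), 2*(1 - |t|/L) * ‖∑ k ∈ s, a k * Complex.exp (2 * π * Complex.I * lam k * t)‖ ^ 2)
      ≤ ∫ t in (-L)..L, 2*(1 - |t|/L) * ‖∑ k ∈ s, a k * Complex.exp (2 * π * Complex.I * lam k * t)‖ ^ 2 := by
    apply intervalIntegral.integral_mono_interval (by rw [hLdef]; linarith) (by linarith)
      (by rw [hLdef]; linarith)
    · refine (ae_restrict_iff' measurableSet_Ioc).mpr (ae_of_all _ ?_)
      intro t ht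
      have habs : |t| ≤ L := abs_le.mpr ⟨ht.1.le, ht.2⟩
      have : |t|/L ≤ 1 := (div_le_one hL).mpr habs
      exact mul_nonneg (by linarith) (hF0 t)
    · exact hwFcont.intervalIntegrable _ _
  -- Step 3: compute the weighted integral as a double sum
  have h4 : (∫ t in (-L)..L, 2*(1 - |t|/L) * ‖∑ k ∈ s, a k * Complex.exp (2 * π * Complex.I * lam k * t)‖ ^ 2)
      = ∑ j ∈ s, ∑ k ∈ s, (a j * (starRingEnd ℂ) (a k)).re * Cker L (2*π*(lam j - lam k)) := by
    have hptw : ∀ t : ℝ, 2*(1 - |t|/L) * ‖∑ k ∈ s, a k * Complex.exp (2 * π * Complex.I * lam k * t)‖ ^ 2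
        = ∑ j ∈ s, ∑ k ∈ s,
            ((a j * (starRingEnd ℂ) (a k)).re * (2*(1 - |t|/L) * Real.cos (2*π*(lam j - lam k)*t))
              - (a j * (starRingEnd ℂ) (a k)).im * (2*(1 - |t|/L) * Real.sin (2*π*(lam j - lam k)*t))) := by
      intro t
      rw [expand_norm_sq s a lam t, Finset.mul_sum]
      refine Finset.sum_congr rfl fun j _ => ?_
      rw [Finset.mul_sum]
      refine Finset.sum_congr rfl fun k _ => ?_
      ring
    rw [intervalIntegral.integral_congr (g := fun t => ∑ j ∈ s, ∑ k ∈ s,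
          ((a j * (starRingEnd ℂ) (a k)).re * (2*(1 - |t|/L) * Real.cos (2*π*(lam j - lam k)*t))
            - (a j * (starRingEnd ℂ) (a k)).im * (2*(1 - |t|/L) * Real.sin (2*π*(lam j - lam k)*t))))
      (fun t _ => hptw t)]
    rw [intervalIntegral.integral_finset_sum (fun j _ => by
      apply Continuous.intervalIntegrable
      apply continuous_finset_sum
      intro k _
      fun_prop)]
    refine Finset.sum_congr rfl fun j _ => ?_
    rw [intervalIntegral.integral_finset_sum (fun k _ => by
      apply Continuous.intervalIntegrable
      fun_prop)]
    refine Finset.sum_congr rfl fun k _ => ?_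
    rw [intervalIntegral.integral_sub (by apply Continuous.intervalIntegrable; fun_prop)
      (by apply Continuous.intervalIntegrable; fun_prop),
      intervalIntegral.integral_const_mul, intervalIntegral.integral_const_mul,
      w_cos_eq L (2*π*(lam j - lam k)) hL, w_sin L (2*π*(lam j - lam k)) hL]
    ring
  -- Step 4: bound the double sum
  have hrow : ∀ j : ℤ, (∑ k ∈ s.erase j, 1/(((j:ℝ)-(k:ℝ))^2)) ≤ 4 := by
    intro j
    have himg : ∑ k ∈ s.erase j, 1/(((j:ℝ)-(k:ℝ))^2)
        = ∑ m ∈ (s.erase j).image (fun k => j - k), 1/((m:ℝ)^2) := by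
      rw [Finset.sum_image (g := fun k => j - k) (f := fun m : ℤ => 1/((m:ℝ)^2))
        (fun x _ y _ h => by simp only at h; omega)]
      refine Finset.sum_congr rfl fun k _ => ?_
      push_cast
      ring_nf
    rw [himg]
    apply intfin_sum_inv_sq
    intro h0
    obtain ⟨k, hk, hk0⟩ := Finset.mem_image.mp h0
    have : k = j := by omega
    exact (Finset.ne_of_mem_erase hk) (this)
  have hterm : ∀ j ∈ s, ∀ k ∈ s.erase j,
      (a j * (starRingEnd ℂ) (a k)).re * Cker L (2*π*(lam j - lam k))
        ≤ (‖a j‖^2 + ‖a k‖^2) * ((1/(9*L)) * (1/(((j:ℝ)-(k:ℝ))^2))) := by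
    intro j hj k hk
    have hjk : j ≠ k := (Finset.ne_of_mem_erase hk).symm
    have hd1 : (1:ℝ) ≤ ((j:ℝ)-(k:ℝ))^2 := by
      have h0 : (1:ℤ) ≤ |j - k| := Int.one_le_abs (sub_ne_zero.mpr hjk)
      have h1 : (1:ℤ) ≤ (j - k)^2 := by nlinarith [h0, abs_nonneg (j-k), sq_abs (j-k)]
      have h2 : ((1:ℤ):ℝ) ≤ (((j - k)^2 : ℤ) : ℝ) := by exact_mod_cast h1
      push_cast at h2
      nlinarith [h2]
    have hsq := lam_gap_sq lam hlam j k hjk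
    have hlamne : lam j - lam k ≠ 0 := by
      intro h
      rw [h] at hsq
      simp at hsq
      nlinarith [hsq, hd1]
    have hbne : 2*π*(lam j - lam k) ≠ 0 := by
      have := Real.pi_pos
      intro h
      apply hlamne
      have : π * (lam j - lam k) = 0 := by linarith [h]
      rcases mul_eq_zero.mp this with h' | h'
      · exact absurd h' (ne_of_gt Real.pi_pos)
      · exact h'
    have hck := Cker_bound L (2*π*(lam j - lam k)) hL hbne
    have hpi : (9:ℝ) ≤ π^2 := by nlinarith [Real.pi_gt_three]
    have hb2 : 36 * (((j:ℝ)-(k:ℝ))^2) ≤ (2*π*(lam j - lam k))^2 := by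
      have : (2*π*(lam j - lam k))^2 = 4*π^2*((lam j - lam k)^2) := by ring
      rw [this]
      have hlamsq : ((j:ℝ)-(k:ℝ))^2 ≤ (lam j - lam k)^2 := hsq
      nlinarith [hlamsq, hd1, hpi, sq_nonneg (lam j - lam k)]
    have hd0 : (0:ℝ) < ((j:ℝ)-(k:ℝ))^2 := by linarith
    have hck2 : |Cker L (2*π*(lam j - lam k))| ≤ 2/(9*L*(((j:ℝ)-(k:ℝ))^2)) := by
      refine hck.trans ?_
      rw [div_le_div_iff₀ (by positivity) (by positivity)]
      nlinarith [hb2, hL.le, mul_le_mul_of_nonneg_left hb2 hL.le]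
    have hre : |(a j * (starRingEnd ℂ) (a k)).re| ≤ ‖a j‖ * ‖a k‖ := by
      refine (Complex.abs_re_le_norm _).trans ?_
      simp [norm_mul, Complex.norm_conj]
    calc (a j * (starRingEnd ℂ) (a k)).re * Cker L (2*π*(lam j - lam k))
        ≤ |(a j * (starRingEnd ℂ) (a k)).re * Cker L (2*π*(lam j - lam k))| := le_abs_self _
      _ = |(a j * (starRingEnd ℂ) (a k)).re| * |Cker L (2*π*(lam j - lam k))| := abs_mul _ _
      _ ≤ (‖a j‖ * ‖a k‖) * (2/(9*L*(((j:ℝ)-(k:ℝ))^2))) := by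
          apply mul_le_mul hre hck2 (abs_nonneg _) (by positivity)
      _ ≤ ((‖a j‖^2 + ‖a k‖^2)/2) * (2/(9*L*(((j:ℝ)-(k:ℝ))^2))) := by
          apply mul_le_mul_of_nonneg_right ?_ (by positivity)
          nlinarith [sq_nonneg (‖a j‖ - ‖a k‖)]
      _ = (‖a j‖^2 + ‖a k‖^2) * ((1/(9*L)) * (1/(((j:ℝ)-(k:ℝ))^2))) := by
          have h9L : (9*L) ≠ 0 := by positivity
          have hdne : (((j:ℝ)-(k:ℝ))^2) ≠ 0 := ne_of_gt hd0
          field_simp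
          try ring
  have hswap : ∀ h : ℤ → ℤ → ℝ,
      (∑ j ∈ s, ∑ k ∈ s.erase j, h j k) = ∑ k ∈ s, ∑ j ∈ s.erase k, h j k := by
    intro h
    have e1 : ∀ j : ℤ, (∑ k ∈ s.erase j, h j k) = ∑ k ∈ s, if k ≠ j then h j k else 0 :=
      fun j => by rw [← Finset.filter_ne', Finset.sum_filter]
    have e2 : ∀ k : ℤ, (∑ j ∈ s.erase k, h j k) = ∑ j ∈ s, if j ≠ k then h j k else 0 :=
      fun k => by rw [← Finset.filter_ne', Finset.sum_filter]
    simp only [e1, e2]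
    rw [Finset.sum_comm]
    refine Finset.sum_congr rfl fun k _ => Finset.sum_congr rfl fun j _ => ?_
    exact if_congr ne_comm rfl rfl
  have hdiag : ∀ j ∈ s, (a j * (starRingEnd ℂ) (a j)).re * Cker L (2*π*(lam j - lam j)) = ‖a j‖^2 * (2*L) := by
    intro j _
    rw [sub_self, mul_zero, Cker, if_pos rfl, Complex.mul_conj]
    congr 1
    rw [Complex.ofReal_re, Complex.normSq_eq_norm_sq]
  have h5 : (∑ j ∈ s, ∑ k ∈ s, (a j * (starRingEnd ℂ) (a k)).re * Cker L (2*π*(lam j - lam k)))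
      ≤ (2*L + 8/(9*L)) * A := by
    have hsplit : (∑ j ∈ s, ∑ k ∈ s, (a j * (starRingEnd ℂ) (a k)).re * Cker L (2*π*(lam j - lam k)))
        = (∑ j ∈ s, ‖a j‖^2 * (2*L))
          + ∑ j ∈ s, ∑ k ∈ s.erase j, (a j * (starRingEnd ℂ) (a k)).re * Cker L (2*π*(lam j - lam k)) := by
      rw [← Finset.sum_add_distrib]
      refine Finset.sum_congr rfl fun j hj => ?_
      rw [← hdiag j hj]
      exact (Finset.add_sum_erase s _ hj).symm
    rw [hsplit]
    have hoff : (∑ j ∈ s, ∑ k ∈ s.erase j, (a j * (starRingEnd ℂ) (a k)).re * Cker L (2*π*(lam j - lam k)))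
        ≤ (8/(9*L)) * A := by
      have step1 : (∑ j ∈ s, ∑ k ∈ s.erase j, (a j * (starRingEnd ℂ) (a k)).re * Cker L (2*π*(lam j - lam k)))
          ≤ ∑ j ∈ s, ∑ k ∈ s.erase j, (‖a j‖^2 + ‖a k‖^2) * ((1/(9*L)) * (1/(((j:ℝ)-(k:ℝ))^2))) :=
        Finset.sum_le_sum fun j hj => Finset.sum_le_sum fun k hk => hterm j hj k hk
      have step2 : (∑ j ∈ s, ∑ k ∈ s.erase j, (‖a j‖^2 + ‖a k‖^2) * ((1/(9*L)) * (1/(((j:ℝ)-(k:ℝ))^2))))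
          ≤ (8/(9*L)) * A := by
        have hdistr : ∀ j k : ℤ, (‖a j‖^2 + ‖a k‖^2) * ((1/(9*L)) * (1/(((j:ℝ)-(k:ℝ))^2)))
            = (1/(9*L)) * (‖a j‖^2 * (1/(((j:ℝ)-(k:ℝ))^2))) + (1/(9*L)) * (‖a k‖^2 * (1/(((j:ℝ)-(k:ℝ))^2))) := by
          intro j k; ring
        simp only [hdistr]
        rw [show (∑ j ∈ s, ∑ k ∈ s.erase j, ((1/(9*L)) * (‖a j‖^2 * (1/(((j:ℝ)-(k:ℝ))^2))) + (1/(9*L)) * (‖a k‖^2 * (1/(((j:ℝ)-(k:ℝ))^2)))))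
            = (∑ j ∈ s, ∑ k ∈ s.erase j, (1/(9*L)) * (‖a j‖^2 * (1/(((j:ℝ)-(k:ℝ))^2))))
              + ∑ j ∈ s, ∑ k ∈ s.erase j, (1/(9*L)) * (‖a k‖^2 * (1/(((j:ℝ)-(k:ℝ))^2))) from by
          rw [← Finset.sum_add_distrib]
          exact Finset.sum_congr rfl fun j _ => by rw [← Finset.sum_add_distrib]]
        have hB1 : (∑ j ∈ s, ∑ k ∈ s.erase j, (1/(9*L)) * (‖a j‖^2 * (1/(((j:ℝ)-(k:ℝ))^2))))
            ≤ (4/(9*L)) * A := by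
          have : ∀ j ∈ s, (∑ k ∈ s.erase j, (1/(9*L)) * (‖a j‖^2 * (1/(((j:ℝ)-(k:ℝ))^2))))
              ≤ (4/(9*L)) * ‖a j‖^2 := by
            intro j _
            rw [← Finset.mul_sum, ← Finset.mul_sum]
            calc (1/(9*L)) * (‖a j‖^2 * ∑ k ∈ s.erase j, 1/(((j:ℝ)-(k:ℝ))^2))
                ≤ (1/(9*L)) * (‖a j‖^2 * 4) := by
                  apply mul_le_mul_of_nonneg_left ?_ (by positivity)
                  exact mul_le_mul_of_nonneg_left (hrow j) (by positivity)
              _ = (4/(9*L)) * ‖a j‖^2 := by ring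
          calc (∑ j ∈ s, ∑ k ∈ s.erase j, (1/(9*L)) * (‖a j‖^2 * (1/(((j:ℝ)-(k:ℝ))^2))))
              ≤ ∑ j ∈ s, (4/(9*L)) * ‖a j‖^2 := Finset.sum_le_sum this
            _ = (4/(9*L)) * A := by rw [hAdef, Finset.mul_sum]
        have hB2 : (∑ j ∈ s, ∑ k ∈ s.erase j, (1/(9*L)) * (‖a k‖^2 * (1/(((j:ℝ)-(k:ℝ))^2))))
            ≤ (4/(9*L)) * A := by
          rw [hswap (fun j k => (1/(9*L)) * (‖a k‖^2 * (1/(((j:ℝ)-(k:ℝ))^2))))]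
          have : ∀ k ∈ s, (∑ j ∈ s.erase k, (1/(9*L)) * (‖a k‖^2 * (1/(((j:ℝ)-(k:ℝ))^2))))
              ≤ (4/(9*L)) * ‖a k‖^2 := by
            intro k _
            rw [← Finset.mul_sum, ← Finset.mul_sum]
            have hrow' : (∑ j ∈ s.erase k, 1/(((j:ℝ)-(k:ℝ))^2)) ≤ 4 := by
              have : (∑ j ∈ s.erase k, 1/(((j:ℝ)-(k:ℝ))^2)) = ∑ j ∈ s.erase k, 1/(((k:ℝ)-(j:ℝ))^2) := by
                refine Finset.sum_congr rfl fun j _ => ?_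
                ring_nf
              rw [this]
              exact hrow k
            calc (1/(9*L)) * (‖a k‖^2 * ∑ j ∈ s.erase k, 1/(((j:ℝ)-(k:ℝ))^2))
                ≤ (1/(9*L)) * (‖a k‖^2 * 4) := by
                  apply mul_le_mul_of_nonneg_left ?_ (by positivity)
                  exact mul_le_mul_of_nonneg_left hrow' (by positivity)
              _ = (4/(9*L)) * ‖a k‖^2 := by ring
          calc (∑ k ∈ s, ∑ j ∈ s.erase k, (1/(9*L)) * (‖a k‖^2 * (1/(((j:ℝ)-(k:ℝ))^2))))
              ≤ ∑ k ∈ s, (4/(9*L)) * ‖a k‖^2 := Finset.sum_le_sum this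
            _ = (4/(9*L)) * A := by rw [hAdef, Finset.mul_sum]
        have : (8:ℝ)/(9*L) * A = (4/(9*L)) * A + (4/(9*L)) * A := by ring
        linarith
      exact step1.trans step2
    have hdsum : (∑ j ∈ s, ‖a j‖^2 * (2*L)) = (2*L) * A := by
      rw [hAdef, Finset.mul_sum]
      exact Finset.sum_congr rfl fun j _ => by ring
    rw [hdsum]
    have : (2*L + 8/(9*L)) * A = (2*L) * A + (8/(9*L)) * A := by ring
    linarith
  -- Step 5: final arithmetic
  have hkey : (2*T+1)/(2*T+2) * (2*L + 8/(9*L)) ≤ 2*(T+1) := by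
    have e1 : (2*T+1) * (8/(9*L)) = 16/9 := by
      rw [hLdef]
      field_simp
      ring
    rw [div_mul_eq_mul_div, div_le_iff₀ (by linarith : (0:ℝ) < 2*T+2), mul_add, e1, hLdef]
    nlinarith
  have hc0 : (0:ℝ) ≤ (2*T+1)/(2*T+2) := by positivity
  have hchain : (∫ t in (-(T/2))..(T/2), ‖∑ k ∈ s, a k * Complex.exp (2 * π * Complex.I * lam k * t)‖ ^ 2)
      ≤ 2*(T+1) * A := by
    calc (∫ t in (-(T/2))..(T/2), ‖∑ k ∈ s, a k * Complex.exp (2 * π * Complex.I * lam k * t)‖ ^ 2)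
        ≤ ∫ t in (-(T/2))..(T/2), (2*T+1)/(2*T+2) * (2*(1 - |t|/L) * ‖∑ k ∈ s, a k * Complex.exp (2 * π * Complex.I * lam k * t)‖ ^ 2) := h1
      _ = (2*T+1)/(2*T+2) * ∫ t in (-(T/2))..(T/2), 2*(1 - |t|/L) * ‖∑ k ∈ s, a k * Complex.exp (2 * π * Complex.I * lam k * t)‖ ^ 2 := h2
      _ ≤ (2*T+1)/(2*T+2) * ∫ t in (-L)..L, 2*(1 - |t|/L) * ‖∑ k ∈ s, a k * Complex.exp (2 * π * Complex.I * lam k * t)‖ ^ 2 :=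
          mul_le_mul_of_nonneg_left h3 hc0
      _ = (2*T+1)/(2*T+2) * ∑ j ∈ s, ∑ k ∈ s, (a j * (starRingEnd ℂ) (a k)).re * Cker L (2*π*(lam j - lam k)) := by rw [h4]
      _ ≤ (2*T+1)/(2*T+2) * ((2*L + 8/(9*L)) * A) := mul_le_mul_of_nonneg_left h5 hc0
      _ = ((2*T+1)/(2*T+2) * (2*L + 8/(9*L))) * A := by ring
      _ ≤ 2*(T+1) * A := mul_le_mul_of_nonneg_right hkey hA0
  calc (1 / T) * ∫ t in (-(T / 2))..(T / 2), ‖∑ k ∈ s, a k * Complex.exp (2 * π * Complex.I * lam k * t)‖ ^ 2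
      ≤ (1 / T) * (2*(T+1) * A) := mul_le_mul_of_nonneg_left hchain (by positivity)
    _ = 2 * ((T + 1) / T) * A := by ring
end

section
/- Let $T \ge 2$, $(\lambda_k)_{k\in\mathbb{Z}}$ real numbers with $\lambda_{k+1}-\lambda_k \ge 1$, and $(a_k)$ a finitely supported complex sequence. Then $\frac{1}{T}\int_{-T/2}^{T/2}\left|\sum_k a_k e^{2i\pi\lambda_k t}\right|^2 dt \ge \frac{\pi^2}{64}\sum_k |a_k|^2$. -/
open Real MeasureTheory Finset

lemma cexp_cont (c : ℂ) : Continuous fun t : ℝ => Complex.exp (c * t) :=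
  Complex.continuous_exp.comp (continuous_const.mul Complex.continuous_ofReal)

lemma cos_exp_int (L α β : ℝ) (h1 : α + β ≠ 0) (h2 : β - α ≠ 0) :
    ∫ t in (-L)..L, Complex.cos (α*t) * Complex.exp (Complex.I*β*t)
      = ((Real.sin ((α+β)*L)/(α+β) + Real.sin ((β-α)*L)/(β-α) : ℝ) : ℂ) := by
  have key : ∀ t : ℝ, Complex.cos (α*t) * Complex.exp (Complex.I*β*t)
      = (Complex.exp ((Complex.I*((α+β : ℝ):ℂ)) * t) + Complex.exp ((Complex.I*((β-α : ℝ):ℂ)) * t)) / 2 := by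
    intro t
    rw [Complex.cos, div_mul_eq_mul_div, add_mul, ← Complex.exp_add, ← Complex.exp_add]
    congr 2 <;> push_cast <;> ring
  have E : ∀ (c : ℝ), c ≠ 0 → (∫ t in (-L)..L, Complex.exp ((Complex.I*(c:ℂ)) * t))
      = ((2 * Real.sin (c*L) / c : ℝ) : ℂ) := by
    intro c hc
    have hc' : (Complex.I*(c:ℂ)) ≠ 0 := by simp [hc, Complex.I_ne_zero]
    rw [integral_exp_mul_complex hc']
    have harg : ∀ x : ℝ, Complex.I * (c:ℂ) * (x:ℂ) = ((c*x : ℝ):ℂ) * Complex.I := by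
      intro x; push_cast; ring
    rw [harg L, harg (-L), Complex.exp_mul_I, Complex.exp_mul_I,
      ← Complex.ofReal_cos, ← Complex.ofReal_sin, ← Complex.ofReal_cos, ← Complex.ofReal_sin,
      show c*(-L) = -(c*L) by ring, Real.cos_neg, Real.sin_neg]
    have hcc : (c : ℂ) ≠ 0 := by exact_mod_cast hc
    push_cast
    field_simp
    ring_nf
  calc ∫ t in (-L)..L, Complex.cos (α*t) * Complex.exp (Complex.I*β*t)
      = ∫ t in (-L)..L, (Complex.exp ((Complex.I*((α+β:ℝ):ℂ)) * t) + Complex.exp ((Complex.I*((β-α:ℝ):ℂ)) * t)) / 2 := by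
        simp_rw [key]
    _ = ((∫ t in (-L)..L, Complex.exp ((Complex.I*((α+β:ℝ):ℂ)) * t))
        + (∫ t in (-L)..L, Complex.exp ((Complex.I*((β-α:ℝ):ℂ)) * t))) / 2 := by
        rw [intervalIntegral.integral_div, intervalIntegral.integral_add
          ((cexp_cont _).intervalIntegrable _ _) ((cexp_cont _).intervalIntegrable _ _)]
    _ = ((Real.sin ((α+β)*L)/(α+β) + Real.sin ((β-α)*L)/(β-α) : ℝ) : ℂ) := by
        rw [E _ h1, E _ h2]
        push_cast
        ring

lemma abs_sin_form (L α β : ℝ) (hαL : α*L = π/2) (h1 : α+β ≠ 0) (h2 : β-α ≠ 0)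
    (hβα : α^2 < β^2) (hα : 0 < α) :
    |Real.sin ((α+β)*L)/(α+β) + Real.sin ((β-α)*L)/(β-α)| ≤ 2*α/(β^2-α^2) := by
  have hs1 : Real.sin ((α+β)*L) = Real.cos (β*L) := by
    rw [show (α+β)*L = β*L + π/2 by rw [← hαL]; ring, Real.sin_add_pi_div_two]
  have hs2 : Real.sin ((β-α)*L) = -Real.cos (β*L) := by
    rw [show (β-α)*L = β*L - π/2 by rw [← hαL]; ring, Real.sin_sub_pi_div_two]
  have hval : Real.sin ((α+β)*L)/(α+β) + Real.sin ((β-α)*L)/(β-α)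
      = Real.cos (β*L) * (-2*α/(β^2-α^2)) := by
    rw [hs1, hs2]
    have hβα' : β^2 - α^2 ≠ 0 := by nlinarith
    field_simp
    ring
  rw [hval, abs_mul]
  have hcos : |Real.cos (β*L)| ≤ 1 := Real.abs_cos_le_one _
  have habs : |(-2*α/(β^2-α^2))| = 2*α/(β^2-α^2) := by
    rw [abs_div, abs_of_pos (by nlinarith : (0:ℝ) < β^2-α^2), abs_of_nonpos (by nlinarith : -2*α ≤ 0)]
    ring_nf
  rw [habs]
  nlinarith [abs_nonneg (Real.cos (β*L)),
    div_nonneg (by nlinarith : (0:ℝ) ≤ 2*α) (by nlinarith : (0:ℝ) ≤ β^2-α^2)]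

noncomputable def Jf (T ξ : ℝ) : ℂ :=
  ∫ t in (-(T/2))..(T/2), Complex.cos (((π/T : ℝ):ℂ)*t) * Complex.exp (Complex.I*((2*π*ξ : ℝ):ℂ)*t)

lemma Jf_zero (T : ℝ) (hT : 0 < T) : Jf T 0 = ((2*T/π : ℝ) : ℂ) := by
  have hπ := Real.pi_pos
  have hα : 0 < π/T := by positivity
  have h1 : π/T + 2*π*0 ≠ 0 := by simpa using hα.ne'
  have h2 : 2*π*0 - π/T ≠ 0 := by rw [mul_zero, zero_sub]; exact neg_ne_zero.mpr hα.ne'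
  rw [Jf, cos_exp_int _ _ _ h1 h2]
  have hL : (π/T + 2*π*0)*(T/2) = π/2 := by field_simp; ring
  have hL2 : (2*π*0 - π/T)*(T/2) = -(π/2) := by field_simp; ring
  rw [hL, hL2, Real.sin_pi_div_two, Real.sin_neg, Real.sin_pi_div_two]
  congr 1
  field_simp
  ring

lemma Jf_bound (T ξ : ℝ) (hT : 2 ≤ T) (hξ : 1 ≤ |ξ|) :
    ‖Jf T ξ‖ ≤ 8/(15*π*T*ξ^2) := by
  have hπ := Real.pi_pos
  have hT0 : (0:ℝ) < T := by linarith
  have hα : 0 < π/T := by positivity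
  have hαle : π/T ≤ π/2 := by gcongr
  have hξ2 : 1 ≤ ξ^2 := by nlinarith [sq_abs ξ]
  have hsq : (π/T)^2 ≤ π^2/4 := by nlinarith [mul_self_le_mul_self hα.le hαle]
  have hpsq : π^2 ≤ π^2*ξ^2 := by nlinarith [mul_le_mul_of_nonneg_left hξ2 (sq_nonneg π)]
  have hβα : (π/T)^2 < (2*π*ξ)^2 := by nlinarith [mul_pos hπ hπ]
  have hgap : (15/4)*π^2*ξ^2 ≤ (2*π*ξ)^2 - (π/T)^2 := by nlinarith
  have habsβ : π/T < |2*π*ξ| := by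
    rw [abs_mul, abs_of_nonneg (by positivity : (0:ℝ) ≤ 2*π)]
    nlinarith [abs_nonneg ξ]
  have h1 : π/T + 2*π*ξ ≠ 0 := by
    intro h
    rw [show 2*π*ξ = -(π/T) by linarith, abs_neg, abs_of_pos hα] at habsβ
    exact lt_irrefl _ habsβ
  have h2 : 2*π*ξ - π/T ≠ 0 := by
    intro h
    rw [show 2*π*ξ = π/T by linarith, abs_of_pos hα] at habsβ
    exact lt_irrefl _ habsβ
  rw [Jf, cos_exp_int _ _ _ h1 h2, Complex.norm_real, Real.norm_eq_abs]
  have hαL : (π/T)*(T/2) = π/2 := by field_simp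
  refine (abs_sin_form (T/2) (π/T) (2*π*ξ) hαL h1 h2 hβα hα).trans ?_
  have hξ0 : (0:ℝ) < ξ^2 := by linarith
  have hαT : (π/T)*T = π := by field_simp
  rw [div_le_div_iff₀ (by nlinarith) (by positivity)]
  nlinarith [hgap, mul_le_mul_of_nonneg_left hgap (by norm_num : (0:ℝ) ≤ 8)]

lemma lam_sep_nat (lam : ℤ → ℝ) (hlam : ∀ k : ℤ, lam (k + 1) - lam k ≥ 1) :
    ∀ (n : ℕ) (k : ℤ), (n:ℝ) ≤ lam (k + n) - lam k := by
  intro n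
  induction n with
  | zero => simp
  | succ m ih =>
    intro k
    have h1 := ih k
    have h2 := hlam (k + m)
    have : (k : ℤ) + (m+1 : ℕ) = (k + m) + 1 := by push_cast; ring
    rw [this]
    push_cast
    linarith

lemma lam_sep (lam : ℤ → ℝ) (hlam : ∀ k : ℤ, lam (k + 1) - lam k ≥ 1) :
    ∀ j k : ℤ, k ≤ j → (j:ℝ) - (k:ℝ) ≤ lam j - lam k := by
  intro j k hkj
  have h := lam_sep_nat lam hlam (j - k).toNat k
  have h2 : k + ((j - k).toNat : ℤ) = j := by omega
  have h3 : (((j - k).toNat : ℕ) : ℝ) = (j:ℝ) - k := by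
    have : ((j - k).toNat : ℤ) = j - k := by omega
    exact_mod_cast congrArg (fun z : ℤ => (z : ℝ)) this
  rw [show ((j:ℤ) : ℝ) - ((k:ℤ) : ℝ) = (((j-k).toNat : ℕ) : ℝ) from h3.symm]
  calc (((j-k).toNat : ℕ) : ℝ) ≤ lam (k + ((j-k).toNat : ℤ)) - lam k := h
    _ = lam j - lam k := by rw [h2]

lemma lam_sep_aux (lam : ℤ → ℝ) (hlam : ∀ k : ℤ, lam (k + 1) - lam k ≥ 1) (j k : ℤ) (h : k < j) :
    1 ≤ lam j - lam k ∧ ((j:ℝ) - (k:ℝ))^2 ≤ (lam j - lam k)^2 := by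
  have h1 := lam_sep lam hlam j k h.le
  have h2 : (1:ℝ) ≤ (j:ℝ) - k := by
    have : ((k+1 : ℤ):ℝ) ≤ ((j:ℤ):ℝ) := by exact_mod_cast h
    push_cast at this; linarith
  refine ⟨by linarith, ?_⟩
  nlinarith

lemma lam_sep_abs (lam : ℤ → ℝ) (hlam : ∀ k : ℤ, lam (k + 1) - lam k ≥ 1) (j k : ℤ) (h : j ≠ k) :
    1 ≤ |lam j - lam k| ∧ ((j:ℝ) - (k:ℝ))^2 ≤ (lam j - lam k)^2 := by
  rcases lt_or_gt_of_ne h with hlt | hgt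
  · obtain ⟨h1, h2⟩ := lam_sep_aux lam hlam k j hlt
    constructor
    · rw [abs_sub_comm]; exact le_trans h1 (le_abs_self _)
    · calc ((j:ℝ)-k)^2 = ((k:ℝ)-j)^2 := by ring
        _ ≤ (lam k - lam j)^2 := h2
        _ = (lam j - lam k)^2 := by ring
  · obtain ⟨h1, h2⟩ := lam_sep_aux lam hlam j k hgt
    exact ⟨le_trans h1 (le_abs_self _), h2⟩

lemma sum_inv_sq_nat (u : Finset ℕ) : (∑ n ∈ u, (1:ℝ)/(n:ℝ)^2) ≤ 2 := by
  have h := sum_le_hasSum u (fun i _ => by positivity) hasSum_zeta_two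
  have : π^2/6 ≤ 2 := by nlinarith [Real.pi_lt_d2, Real.pi_pos]
  linarith

lemma row_bound (s : Finset ℤ) (k : ℤ) : ∑ j ∈ s.erase k, (1:ℝ)/((j:ℝ)-(k:ℝ))^2 ≤ 4 := by
  classical
  have hsplit := (Finset.sum_filter_add_sum_filter_not (s.erase k) (k < ·)
    (fun j => (1:ℝ)/((j:ℝ)-(k:ℝ))^2)).symm
  rw [hsplit]
  have hpos : ∑ j ∈ (s.erase k).filter (k < ·), (1:ℝ)/((j:ℝ)-(k:ℝ))^2 ≤ 2 := by
    have hinj : ∀ x ∈ (s.erase k).filter (k < ·), ∀ y ∈ (s.erase k).filter (k < ·),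
        (x - k).toNat = (y - k).toNat → x = y := by
      intro x hx y hy hxy
      simp [Finset.mem_filter] at hx hy
      omega
    have heq : ∑ j ∈ (s.erase k).filter (k < ·), (1:ℝ)/((j:ℝ)-(k:ℝ))^2
        = ∑ n ∈ ((s.erase k).filter (k < ·)).image (fun j => (j - k).toNat), (1:ℝ)/(n:ℝ)^2 := by
      rw [Finset.sum_image hinj]
      apply Finset.sum_congr rfl
      intro j hj
      simp only [Finset.mem_filter] at hj
      have hc : (((j - k).toNat : ℕ) : ℝ) = (j:ℝ) - k := by
        have h1 : ((j - k).toNat : ℤ) = j - k := Int.toNat_of_nonneg (by omega)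
        exact_mod_cast congrArg (fun z : ℤ => (z : ℝ)) h1
      rw [hc]
    rw [heq]; exact sum_inv_sq_nat _
  have hneg : ∑ j ∈ (s.erase k).filter (fun j => ¬ k < j), (1:ℝ)/((j:ℝ)-(k:ℝ))^2 ≤ 2 := by
    have hinj : ∀ x ∈ (s.erase k).filter (fun j => ¬ k < j), ∀ y ∈ (s.erase k).filter (fun j => ¬ k < j),
        (k - x).toNat = (k - y).toNat → x = y := by
      intro x hx y hy hxy
      simp [Finset.mem_filter, Finset.mem_erase] at hx hy
      omega
    have heq : ∑ j ∈ (s.erase k).filter (fun j => ¬ k < j), (1:ℝ)/((j:ℝ)-(k:ℝ))^2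
        = ∑ n ∈ ((s.erase k).filter (fun j => ¬ k < j)).image (fun j => (k - j).toNat), (1:ℝ)/(n:ℝ)^2 := by
      rw [Finset.sum_image hinj]
      apply Finset.sum_congr rfl
      intro j hj
      simp only [Finset.mem_filter, Finset.mem_erase] at hj
      have hc : (((k - j).toNat : ℕ) : ℝ) = (k:ℝ) - j := by
        have h1 : ((k - j).toNat : ℤ) = k - j := Int.toNat_of_nonneg (by omega)
        exact_mod_cast congrArg (fun z : ℤ => (z : ℝ)) h1
      rw [hc, show ((k:ℝ)-j)^2 = ((j:ℝ)-k)^2 by ring]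
    rw [heq]; exact sum_inv_sq_nat _
  linarith

lemma sum_erase_comm {M : Type*} [AddCommMonoid M] (s : Finset ℤ) (F : ℤ → ℤ → M) :
    ∑ j ∈ s, ∑ k ∈ s.erase j, F j k = ∑ k ∈ s, ∑ j ∈ s.erase k, F j k := by
  classical
  have h1 : ∑ j ∈ s, ∑ k ∈ s.erase j, F j k
      = ∑ j ∈ s, ∑ k ∈ s, if k ≠ j then F j k else 0 := by
    apply Finset.sum_congr rfl
    intro j _
    rw [← Finset.filter_ne' s j, Finset.sum_filter]
  have h2 : ∑ k ∈ s, ∑ j ∈ s.erase k, F j k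
      = ∑ k ∈ s, ∑ j ∈ s, if j ≠ k then F j k else 0 := by
    apply Finset.sum_congr rfl
    intro k _
    rw [← Finset.filter_ne' s k, Finset.sum_filter]
  rw [h1, h2, Finset.sum_comm]
  apply Finset.sum_congr rfl
  intro k _
  apply Finset.sum_congr rfl
  intro j _
  by_cases h : j = k
  · simp [h]
  · simp [h, Ne.symm h]

lemma expansion (T : ℝ) (lam : ℤ → ℝ) (s : Finset ℤ) (a : ℤ → ℂ) :
    (∫ t in (-(T/2))..(T/2), Real.cos ((π/T)*t) * ‖∑ k ∈ s, a k * Complex.exp (2 * π * Complex.I * lam k * t)‖^2)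
      = (∑ j ∈ s, ∑ k ∈ s, a j * (starRingEnd ℂ) (a k) * Jf T (lam j - lam k)).re := by
  set f : ℝ → ℂ := fun t => ∑ k ∈ s, a k * Complex.exp (2 * π * Complex.I * lam k * t) with hfdef
  set K : ℤ → ℤ → ℝ → ℂ := fun j k t => a j * (starRingEnd ℂ) (a k) *
    (Complex.cos (((π/T : ℝ):ℂ)*t) * Complex.exp (Complex.I*((2*π*(lam j - lam k) : ℝ):ℂ)*t)) with hKdef
  have hKcont : ∀ j k, Continuous (K j k) := by
    intro j k; rw [hKdef]; fun_prop
  have step1 : ∀ t : ℝ, ((Real.cos ((π/T)*t) * ‖f t‖^2 : ℝ) : ℂ) = ∑ j ∈ s, ∑ k ∈ s, K j k t := by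
    intro t
    have hf : ((‖f t‖^2 : ℝ) : ℂ) = f t * (starRingEnd ℂ) (f t) := by
      push_cast
      rw [Complex.mul_conj']
    have hcos : ((Real.cos ((π/T)*t) : ℝ) : ℂ) = Complex.cos (((π/T:ℝ):ℂ)*t) := by
      rw [Complex.ofReal_cos, Complex.ofReal_mul]
    calc ((Real.cos ((π/T)*t) * ‖f t‖^2 : ℝ) : ℂ)
        = Complex.cos (((π/T:ℝ):ℂ)*t) * (f t * (starRingEnd ℂ) (f t)) := by
          rw [Complex.ofReal_mul, hcos, hf]
      _ = ∑ j ∈ s, ∑ k ∈ s, K j k t := by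
          rw [hfdef]
          simp only []
          rw [map_sum, Finset.sum_mul_sum, Finset.mul_sum]
          apply Finset.sum_congr rfl
          intro j _
          rw [Finset.mul_sum]
          apply Finset.sum_congr rfl
          intro k _
          rw [map_mul, ← Complex.exp_conj]
          have hconj : (starRingEnd ℂ) (2 * ↑π * Complex.I * ↑(lam k) * ↑t)
              = -(2 * ↑π * Complex.I * ↑(lam k) * ↑t) := by
            simp only [map_mul, Complex.conj_I, Complex.conj_ofReal, map_ofNat]
            ring
          rw [hconj]
          have hE : Complex.exp (2 * ↑π * Complex.I * ↑(lam j) * ↑t) *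
              Complex.exp (-(2 * ↑π * Complex.I * ↑(lam k) * ↑t))
              = Complex.exp (Complex.I*((2*π*(lam j - lam k) : ℝ):ℂ)*t) := by
            rw [← Complex.exp_add]
            congr 1
            push_cast
            ring
          rw [hKdef]
          calc Complex.cos (((π/T:ℝ):ℂ)*t) *
              (a j * Complex.exp (2 * ↑π * Complex.I * ↑(lam j) * ↑t) *
                ((starRingEnd ℂ) (a k) * Complex.exp (-(2 * ↑π * Complex.I * ↑(lam k) * ↑t))))
              = a j * (starRingEnd ℂ) (a k) * (Complex.cos (((π/T:ℝ):ℂ)*t) *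
                (Complex.exp (2 * ↑π * Complex.I * ↑(lam j) * ↑t) *
                  Complex.exp (-(2 * ↑π * Complex.I * ↑(lam k) * ↑t)))) := by ring
            _ = _ := by rw [hE]
  have hGint : IntervalIntegrable (fun t => ∑ j ∈ s, ∑ k ∈ s, K j k t) volume (-(T/2)) (T/2) :=
    (continuous_finset_sum s fun j _ => continuous_finset_sum s fun k _ => hKcont j k).intervalIntegrable _ _
  calc (∫ t in (-(T/2))..(T/2), Real.cos ((π/T)*t) * ‖f t‖^2)
      = ∫ t in (-(T/2))..(T/2), Complex.reCLM (∑ j ∈ s, ∑ k ∈ s, K j k t) := by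
        apply intervalIntegral.integral_congr
        intro t _
        have h := congrArg Complex.re (step1 t)
        rw [Complex.ofReal_re] at h
        simpa only [Complex.reCLM_apply] using h
    _ = Complex.reCLM (∫ t in (-(T/2))..(T/2), ∑ j ∈ s, ∑ k ∈ s, K j k t) :=
        Complex.reCLM.intervalIntegral_comp_comm hGint
    _ = (∑ j ∈ s, ∑ k ∈ s, a j * (starRingEnd ℂ) (a k) * Jf T (lam j - lam k)).re := by
        have hval : (∫ t in (-(T/2))..(T/2), ∑ j ∈ s, ∑ k ∈ s, K j k t)
            = ∑ j ∈ s, ∑ k ∈ s, a j * (starRingEnd ℂ) (a k) * Jf T (lam j - lam k) := by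
          rw [intervalIntegral.integral_finset_sum
            (fun j _ => ((continuous_finset_sum s fun k _ => hKcont j k).intervalIntegrable _ _))]
          apply Finset.sum_congr rfl
          intro j _
          rw [intervalIntegral.integral_finset_sum (fun k _ => (hKcont j k).intervalIntegrable _ _)]
          apply Finset.sum_congr rfl
          intro k _
          rw [hKdef]
          simp only []
          rw [intervalIntegral.integral_const_mul]
          rfl
        rw [hval, Complex.reCLM_apply]

theorem stmt_4 (T : ℝ) (hT : 2 ≤ T)
    (lam : ℤ → ℝ) (hlam : ∀ k : ℤ, lam (k + 1) - lam k ≥ 1)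
    (s : Finset ℤ) (a : ℤ → ℂ) :
    (1 / T) * ∫ t in (-(T / 2))..(T / 2),
        ‖∑ k ∈ s, a k * Complex.exp (2 * π * Complex.I * lam k * t)‖ ^ 2
      ≥ π ^ 2 / 64 * ∑ k ∈ s, ‖a k‖ ^ 2 := by
  classical
  have hπ := Real.pi_pos
  have hT0 : (0:ℝ) < T := by linarith
  set S := ∑ k ∈ s, ‖a k‖^2 with hS
  have hS0 : (0:ℝ) ≤ S := Finset.sum_nonneg fun k _ => by positivity
  have hfc : Continuous fun t : ℝ => ∑ k ∈ s, a k * Complex.exp (2 * π * Complex.I * lam k * t) := by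
    apply continuous_finset_sum; intro k _; fun_prop
  have hfc2 : Continuous fun t : ℝ => ‖∑ k ∈ s, a k * Complex.exp (2 * π * Complex.I * lam k * t)‖^2 :=
    hfc.norm.pow 2
  have hcosc : Continuous fun t : ℝ => Real.cos ((π/T)*t) :=
    Real.continuous_cos.comp (continuous_const.mul continuous_id)
  -- Step A : cos-weighted integral is a lower bound
  have hIcmp : (∫ t in (-(T/2))..(T/2), Real.cos ((π/T)*t) * ‖∑ k ∈ s, a k * Complex.exp (2 * π * Complex.I * lam k * t)‖^2)
      ≤ ∫ t in (-(T/2))..(T/2), ‖∑ k ∈ s, a k * Complex.exp (2 * π * Complex.I * lam k * t)‖^2 := by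
    apply intervalIntegral.integral_mono_on (by linarith)
      ((hcosc.mul hfc2).intervalIntegrable _ _) (hfc2.intervalIntegrable _ _)
    intro x _
    have h1 : Real.cos ((π/T)*x) ≤ 1 := Real.cos_le_one _
    simp only [Pi.mul_apply]
    nlinarith [sq_nonneg ‖∑ k ∈ s, a k * Complex.exp (2 * π * Complex.I * lam k * x)‖,
      norm_nonneg (∑ k ∈ s, a k * Complex.exp (2 * π * Complex.I * lam k * x))]
  -- Step B : expansion
  have hexp := expansion T lam s a
  -- Step C : diagonal split
  set F : ℤ → ℤ → ℂ := fun j k => a j * (starRingEnd ℂ) (a k) * Jf T (lam j - lam k) with hFdef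
  have hsplit : ∑ j ∈ s, ∑ k ∈ s, F j k
      = (((2*T/π * S : ℝ)) : ℂ) + ∑ j ∈ s, ∑ k ∈ s.erase j, F j k := by
    have hrow : ∀ j ∈ s, ∑ k ∈ s, F j k
        = (((2*T/π * ‖a j‖^2 : ℝ)) : ℂ) + ∑ k ∈ s.erase j, F j k := by
      intro j hj
      rw [← Finset.add_sum_erase s _ hj]
      congr 1
      rw [hFdef]
      simp only []
      rw [sub_self, Jf_zero T hT0, Complex.mul_conj']
      push_cast
      ring
    rw [Finset.sum_congr rfl hrow, Finset.sum_add_distrib]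
    congr 1
    rw [← Complex.ofReal_sum]
    norm_cast
    rw [hS, Finset.mul_sum]
  -- Step D : off-diagonal bound
  have hterm : ∀ j ∈ s, ∀ k ∈ s.erase j, ‖F j k‖
      ≤ (4/(15*π*T)) * ((‖a j‖^2 + ‖a k‖^2) * (1/((j:ℝ)-(k:ℝ))^2)) := by
    intro j hj k hk
    have hkj : k ≠ j := (Finset.mem_erase.mp hk).1
    obtain ⟨habs1, hsq⟩ := lam_sep_abs lam hlam j k (Ne.symm hkj)
    have hJ := Jf_bound T (lam j - lam k) hT habs1
    have hz : (1:ℤ) ≤ (j - k)^2 := by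
      nlinarith [Int.one_le_abs (show j - k ≠ 0 by omega), sq_abs (j-k), abs_nonneg (j-k)]
    have hjk2 : (1:ℝ) ≤ ((j:ℝ)-(k:ℝ))^2 := by exact_mod_cast hz
    have hJ2 : ‖Jf T (lam j - lam k)‖ ≤ 8/(15*π*T) * (1/((j:ℝ)-(k:ℝ))^2) := by
      refine hJ.trans ?_
      rw [div_mul_div_comm, mul_one]
      gcongr
    have hAM : ‖a j‖ * ‖a k‖ ≤ (‖a j‖^2 + ‖a k‖^2)/2 := by
      nlinarith [sq_nonneg (‖a j‖ - ‖a k‖)]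
    calc ‖F j k‖ = (‖a j‖ * ‖a k‖) * ‖Jf T (lam j - lam k)‖ := by
          rw [hFdef]; simp only []
          rw [norm_mul, norm_mul, RCLike.norm_conj]
      _ ≤ ((‖a j‖^2 + ‖a k‖^2)/2) * (8/(15*π*T) * (1/((j:ℝ)-(k:ℝ))^2)) :=
          mul_le_mul hAM hJ2 (norm_nonneg _) (by positivity)
      _ = (4/(15*π*T)) * ((‖a j‖^2 + ‖a k‖^2) * (1/((j:ℝ)-(k:ℝ))^2)) := by ring
  set W := ∑ j ∈ s, ∑ k ∈ s.erase j, (‖a j‖^2 + ‖a k‖^2) * (1/((j:ℝ)-(k:ℝ))^2) with hWdef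
  have hRnorm : ‖∑ j ∈ s, ∑ k ∈ s.erase j, F j k‖ ≤ (4/(15*π*T)) * W := by
    refine (norm_sum_le _ _).trans ?_
    rw [hWdef, Finset.mul_sum]
    apply Finset.sum_le_sum
    intro j hj
    refine (norm_sum_le _ _).trans ?_
    rw [Finset.mul_sum]
    exact Finset.sum_le_sum (hterm j hj)
  have hW : W ≤ 8 * S := by
    have hW1 : ∑ j ∈ s, ∑ k ∈ s.erase j, ‖a j‖^2 * (1/((j:ℝ)-(k:ℝ))^2) ≤ 4 * S := by
      have : ∀ j ∈ s, ∑ k ∈ s.erase j, ‖a j‖^2 * (1/((j:ℝ)-(k:ℝ))^2) ≤ ‖a j‖^2 * 4 := by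
        intro j _
        rw [← Finset.mul_sum]
        apply mul_le_mul_of_nonneg_left _ (by positivity)
        have heq : ∑ k ∈ s.erase j, (1:ℝ)/((j:ℝ)-(k:ℝ))^2
            = ∑ k ∈ s.erase j, (1:ℝ)/((k:ℝ)-(j:ℝ))^2 := by
          apply Finset.sum_congr rfl
          intro k _
          rw [show ((j:ℝ)-(k:ℝ))^2 = ((k:ℝ)-(j:ℝ))^2 by ring]
        rw [heq]
        exact row_bound s j
      refine (Finset.sum_le_sum this).trans ?_
      rw [hS, ← Finset.sum_mul]
      ring_nf
      rfl
    have hW2 : ∑ j ∈ s, ∑ k ∈ s.erase j, ‖a k‖^2 * (1/((j:ℝ)-(k:ℝ))^2) ≤ 4 * S := by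
      rw [sum_erase_comm s (fun j k => ‖a k‖^2 * (1/((j:ℝ)-(k:ℝ))^2))]
      have : ∀ k ∈ s, ∑ j ∈ s.erase k, ‖a k‖^2 * (1/((j:ℝ)-(k:ℝ))^2) ≤ ‖a k‖^2 * 4 := by
        intro k _
        rw [← Finset.mul_sum]
        exact mul_le_mul_of_nonneg_left (row_bound s k) (by positivity)
      refine (Finset.sum_le_sum this).trans ?_
      rw [hS, ← Finset.sum_mul]
      ring_nf
      rfl
    have : W = (∑ j ∈ s, ∑ k ∈ s.erase j, ‖a j‖^2 * (1/((j:ℝ)-(k:ℝ))^2))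
        + ∑ j ∈ s, ∑ k ∈ s.erase j, ‖a k‖^2 * (1/((j:ℝ)-(k:ℝ))^2) := by
      rw [hWdef, ← Finset.sum_add_distrib]
      apply Finset.sum_congr rfl
      intro j _
      rw [← Finset.sum_add_distrib]
      apply Finset.sum_congr rfl
      intro k _
      ring
    linarith
  -- Step E : lower bound for the weighted integral
  have hIc : (2*T/π) * S - (32/(15*π*T)) * S
      ≤ ∫ t in (-(T/2))..(T/2), Real.cos ((π/T)*t) * ‖∑ k ∈ s, a k * Complex.exp (2 * π * Complex.I * lam k * t)‖^2 := by
    rw [hexp, hsplit]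
    rw [Complex.add_re, Complex.ofReal_re]
    have h1 : |(∑ j ∈ s, ∑ k ∈ s.erase j, F j k).re| ≤ (32/(15*π*T)) * S := by
      refine (Complex.abs_re_le_norm _).trans ?_
      refine hRnorm.trans ?_
      have h4 : (4/(15*π*T)) * W ≤ (4/(15*π*T)) * (8*S) :=
        mul_le_mul_of_nonneg_left hW (by positivity)
      have heq : (4/(15*π*T)) * (8*S) = 32/(15*π*T)*S := by ring
      linarith
    have h2 := neg_abs_le (∑ j ∈ s, ∑ k ∈ s.erase j, F j k).re
    nlinarith [h1, h2]
  -- Step F : numerics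
  have hπ2 : π^2 ≤ 10 := by nlinarith [Real.pi_lt_d2, Real.pi_pos]
  have hπ3 : π^3 ≤ 32 := by nlinarith [Real.pi_lt_d2, Real.pi_pos, hπ2]
  have hT2 : (4:ℝ) ≤ T^2 := by nlinarith
  have hcoef : π^2/64 ≤ 2/π - 32/(15*π*T^2) := by
    have h1 : 32/(15*π*T^2) ≤ 8/(15*π) := by
      rw [div_le_div_iff₀ (by positivity) (by positivity)]
      nlinarith
    have h2 : π^2/64 ≤ 22/(15*π) := by
      rw [div_le_div_iff₀ (by positivity) (by positivity)]
      nlinarith [hπ3]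
    have h3 : (22:ℝ)/(15*π) = 2/π - 8/(15*π) := by
      field_simp
      ring
    linarith
  rw [ge_iff_le]
  have hI : (2*T/π) * S - (32/(15*π*T)) * S ≤ ∫ t in (-(T/2))..(T/2), ‖∑ k ∈ s, a k * Complex.exp (2 * π * Complex.I * lam k * t)‖^2 :=
    hIc.trans hIcmp
  calc π^2/64 * S ≤ (2/π - 32/(15*π*T^2)) * S := mul_le_mul_of_nonneg_right hcoef hS0
    _ = (1/T) * ((2*T/π) * S - (32/(15*π*T)) * S) := by
        field_simp
    _ ≤ (1/T) * ∫ t in (-(T/2))..(T/2), ‖∑ k ∈ s, a k * Complex.exp (2 * π * Complex.I * lam k * t)‖^2 :=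
        mul_le_mul_of_nonneg_left hI (by positivity)
end

section
/- Let $q > 1$, let $(n_j)_{j \ge 0}$ be integers with $n_0 \ge 1$ and $n_{j+1} \ge q n_j$, and let $1 \le p < \infty$. There exist constants $A_{p,q}, B_{p,q} > 0$ such that for every finitely supported complex sequence $(c_j)$, $A_{p,q}\left(\sum_j |c_j|^2\right)^{1/2} \le \left(\int_0^1 \left|\sum_j c_j e^{2i\pi n_j t}\right|^p dt\right)^{1/p} \le B_{p,q}\left(\sum_j |c_j|^2\right)^{1/2}$. -/
open Real MeasureTheory Finset intervalIntegral
open scoped ENNReal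

noncomputable def LacE (k : ℕ) (t : ℝ) : ℂ := Complex.exp (2 * π * Complex.I * (k : ℂ) * t)

lemma lacE_cont (k : ℕ) : Continuous (LacE k) := by
  unfold LacE; fun_prop

lemma lacE_orth (a b : ℕ) :
    (∫ t in (0:ℝ)..1, LacE a t * (starRingEnd ℂ) (LacE b t)) = if a = b then 1 else 0 := by
  have key : ∀ t : ℝ, LacE a t * (starRingEnd ℂ) (LacE b t)
      = Complex.exp ((2 * π * Complex.I * ((a : ℂ) - b)) * t) := by
    intro t
    unfold LacE
    rw [← Complex.exp_conj, ← Complex.exp_add]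
    congr 1
    simp only [map_mul, Complex.conj_ofReal, Complex.conj_I, Complex.conj_natCast,
      map_ofNat]
    ring
  simp_rw [key]
  by_cases h : a = b
  · subst h; simp
  · have hc : (2 * π * Complex.I * ((a : ℂ) - b)) ≠ 0 := by
      have : ((a : ℂ) - b) ≠ 0 := by
        simp only [sub_ne_zero]
        exact_mod_cast fun H => h (Nat.cast_injective H)
      simp [Complex.I_ne_zero, Real.pi_ne_zero, this, Complex.ofReal_ne_zero]
    rw [integral_exp_mul_complex hc]
    simp only [h, if_false]
    rw [div_eq_zero_iff]
    left
    rw [sub_eq_zero]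
    have : (2 * ↑π * Complex.I * ((a:ℂ) - b)) = ((a : ℤ) - (b:ℤ) : ℤ) * (2 * ↑π * Complex.I) := by
      push_cast; ring
    push_cast
    rw [mul_one, mul_zero, Complex.exp_zero, this, Complex.exp_int_mul_two_pi_mul_I]

lemma lacE_L2 {ι : Type*} (u : Finset ι) (ν : ι → ℕ) (hν : Set.InjOn ν ↑u) (d : ι → ℂ) :
    (∫ t in (0:ℝ)..1, ‖∑ k ∈ u, d k * LacE (ν k) t‖ ^ 2) = ∑ k ∈ u, ‖d k‖ ^ 2 := by
  have hg : Continuous (fun t => ∑ k ∈ u, d k * LacE (ν k) t) := by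
    exact continuous_finset_sum _ fun k _ => continuous_const.mul (lacE_cont _)
  have key : ∀ t : ℝ, (‖∑ k ∈ u, d k * LacE (ν k) t‖ : ℝ) ^ 2
      = ((∑ k ∈ u, d k * LacE (ν k) t) * (starRingEnd ℂ) (∑ k ∈ u, d k * LacE (ν k) t)).re := by
    intro t
    rw [Complex.mul_conj, Complex.normSq_eq_norm_sq,
      Complex.ofReal_re]
  simp_rw [key]
  have hint : Continuous fun t => (∑ k ∈ u, d k * LacE (ν k) t)
      * (starRingEnd ℂ) (∑ k ∈ u, d k * LacE (ν k) t) :=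
    hg.mul (Complex.continuous_conj.comp hg)
  rw [intervalIntegral.integral_of_le zero_le_one]
  have hre : Complex.re = RCLike.re := rfl
  rw [hre, integral_re (hint.integrableOn_Ioc), ← hre]
  rw [← intervalIntegral.integral_of_le zero_le_one]
  have expand : ∀ t : ℝ, (∑ k ∈ u, d k * LacE (ν k) t) * (starRingEnd ℂ) (∑ k ∈ u, d k * LacE (ν k) t)
      = ∑ j ∈ u, ∑ k ∈ u, (d j * (starRingEnd ℂ) (d k)) * (LacE (ν j) t * (starRingEnd ℂ) (LacE (ν k) t)) := by
    intro t
    rw [map_sum, Finset.sum_mul_sum]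
    refine Finset.sum_congr rfl fun j _ => Finset.sum_congr rfl fun k _ => ?_
    rw [map_mul]; ring
  simp_rw [expand]
  rw [intervalIntegral.integral_finset_sum]
  · have : ∀ j ∈ u, (∫ t in (0:ℝ)..1, ∑ k ∈ u, (d j * (starRingEnd ℂ) (d k)) * (LacE (ν j) t * (starRingEnd ℂ) (LacE (ν k) t)))
        = (d j * (starRingEnd ℂ) (d j)) := by
      intro j hj
      rw [intervalIntegral.integral_finset_sum]
      · have : ∀ k ∈ u, (∫ t in (0:ℝ)..1, (d j * (starRingEnd ℂ) (d k)) * (LacE (ν j) t * (starRingEnd ℂ) (LacE (ν k) t)))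
            = if ν j = ν k then d j * (starRingEnd ℂ) (d k) else 0 := by
          intro k _
          rw [intervalIntegral.integral_const_mul, lacE_orth]
          split <;> simp
        rw [Finset.sum_congr rfl this]
        rw [Finset.sum_eq_single_of_mem j hj (fun k hk hne => if_neg (fun h => hne (hν hk hj h.symm))),
          if_pos rfl]
      · exact fun k _ => (continuous_const.mul ((lacE_cont _).mul (Complex.continuous_conj.comp (lacE_cont _)))).intervalIntegrable _ _
    rw [Finset.sum_congr rfl this]
    rw [Complex.re_sum]
    refine Finset.sum_congr rfl fun j _ => ?_
    rw [Complex.mul_conj, Complex.normSq_eq_norm_sq, Complex.ofReal_re]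
  · exact fun j _ => (continuous_finset_sum _ fun k _ => continuous_const.mul ((lacE_cont _).mul (Complex.continuous_conj.comp (lacE_cont _)))).intervalIntegrable _ _

lemma lacE_prod {ι : Type*} (u : Finset ι) (a : ι → ℕ) (t : ℝ) :
    (∏ i ∈ u, LacE (a i) t) = LacE (∑ i ∈ u, a i) t := by
  simp only [LacE]
  rw [← Complex.exp_sum]
  congr 1
  rw [← Finset.sum_mul, ← Finset.mul_sum]
  push_cast
  ring

lemma lacE_L2m (n : ℕ → ℕ) (m : ℕ) (C : ℕ)
    (hfib : ∀ (N : ℕ) (s : Finset ℕ),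
      ((Fintype.piFinset (fun _ : Fin m => s)).filter (fun σ => ∑ i, n (σ i) = N)).card ≤ C)
    (s : Finset ℕ) (c : ℕ → ℂ) :
    (∫ t in (0:ℝ)..1, ‖(∑ j ∈ s, c j * LacE (n j) t) ^ m‖ ^ 2)
      ≤ (C : ℝ) * (∑ j ∈ s, ‖c j‖ ^ 2) ^ m := by
  classical
  set T := Fintype.piFinset (fun _ : Fin m => s) with hT
  set d : (Fin m → ℕ) → ℂ := fun σ => ∏ i, c (σ i) with hd
  set ν : (Fin m → ℕ) → ℕ := fun σ => ∑ i, n (σ i) with hν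
  have hexp : ∀ t : ℝ, (∑ j ∈ s, c j * LacE (n j) t) ^ m
      = ∑ N ∈ T.image ν, (∑ σ ∈ T.filter (fun σ => ν σ = N), d σ) * LacE N t := by
    intro t
    rw [Finset.sum_pow']
    have h1 : ∀ σ ∈ T, (∏ i, c (σ i) * LacE (n (σ i)) t) = d σ * LacE (ν σ) t := by
      intro σ _
      rw [Finset.prod_mul_distrib, lacE_prod]
    rw [Finset.sum_congr rfl h1]
    rw [← Finset.sum_fiberwise_of_maps_to (fun σ hσ => Finset.mem_image_of_mem ν hσ)
      (fun σ => d σ * LacE (ν σ) t)]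
    refine Finset.sum_congr rfl fun N hN => ?_
    rw [Finset.sum_mul]
    refine Finset.sum_congr rfl fun σ hσ => ?_
    rw [(Finset.mem_filter.1 hσ).2]
  simp_rw [hexp]
  have hL2 := lacE_L2 (T.image ν) id (Function.injective_id.injOn)
    (fun N => ∑ σ ∈ T.filter (fun σ => ν σ = N), d σ)
  simp only [id_eq] at hL2
  rw [hL2]
  have hbound : ∀ N ∈ T.image ν,
      ‖∑ σ ∈ T.filter (fun σ => ν σ = N), d σ‖ ^ 2
        ≤ (C : ℝ) * ∑ σ ∈ T.filter (fun σ => ν σ = N), ‖d σ‖ ^ 2 := by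
    intro N _
    calc ‖∑ σ ∈ T.filter (fun σ => ν σ = N), d σ‖ ^ 2
        ≤ (∑ σ ∈ T.filter (fun σ => ν σ = N), ‖d σ‖) ^ 2 := by
          apply pow_le_pow_left₀ (norm_nonneg _) (norm_sum_le _ _)
    _ ≤ ((T.filter (fun σ => ν σ = N)).card : ℝ)
          * ∑ σ ∈ T.filter (fun σ => ν σ = N), ‖d σ‖ ^ 2 := by
          exact sq_sum_le_card_mul_sum_sq
    _ ≤ (C : ℝ) * ∑ σ ∈ T.filter (fun σ => ν σ = N), ‖d σ‖ ^ 2 := by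
          apply mul_le_mul_of_nonneg_right _ (Finset.sum_nonneg fun σ _ => sq_nonneg _)
          exact_mod_cast hfib N s
  calc (∑ N ∈ T.image ν, ‖∑ σ ∈ T.filter (fun σ => ν σ = N), d σ‖ ^ 2)
      ≤ ∑ N ∈ T.image ν, (C:ℝ) * ∑ σ ∈ T.filter (fun σ => ν σ = N), ‖d σ‖ ^ 2 :=
        Finset.sum_le_sum hbound
  _ = (C:ℝ) * ∑ N ∈ T.image ν, ∑ σ ∈ T.filter (fun σ => ν σ = N), ‖d σ‖ ^ 2 := by
        rw [Finset.mul_sum]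
  _ = (C:ℝ) * ∑ σ ∈ T, ‖d σ‖ ^ 2 := by
        rw [Finset.sum_fiberwise_of_maps_to (fun σ hσ => Finset.mem_image_of_mem ν hσ)]
  _ = (C:ℝ) * (∑ j ∈ s, ‖c j‖ ^ 2) ^ m := by
        congr 1
        rw [Finset.sum_pow']
        refine Finset.sum_congr rfl fun σ _ => ?_
        rw [hd]
        simp only
        rw [norm_prod, ← Finset.prod_pow]

section Counting
variable {q : ℝ} {n : ℕ → ℕ}

lemma lac_pos (hq : 1 < q) (hn0 : 1 ≤ n 0) (hlac : ∀ j, (n (j + 1) : ℝ) ≥ q * n j) :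
    ∀ j, 1 ≤ n j := by
  intro j; induction j with
  | zero => exact hn0
  | succ j ih =>
    have h1 : (1:ℝ) ≤ (n j : ℝ) := by exact_mod_cast ih
    have h2 : (1:ℝ) < n (j+1) := by nlinarith [hlac j]
    exact_mod_cast h2.le

lemma lac_mono (hq : 1 < q) (hn0 : 1 ≤ n 0) (hlac : ∀ j, (n (j + 1) : ℝ) ≥ q * n j) :
    StrictMono n := by
  apply strictMono_nat_of_lt_succ
  intro j
  have h1 : (1:ℝ) ≤ (n j : ℝ) := by exact_mod_cast lac_pos hq hn0 hlac j
  have h2 : (n j : ℝ) < n (j+1) := by nlinarith [hlac j]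
  exact_mod_cast h2

lemma lac_gt (hq : 1 < q) (hn0 : 1 ≤ n 0) (hlac : ∀ j, (n (j + 1) : ℝ) ≥ q * n j) :
    ∀ j, j < n j := by
  intro j; induction j with
  | zero => omega
  | succ j ih =>
    have := lac_mono hq hn0 hlac (show j < j + 1 by omega)
    omega

lemma lac_grow (hq : 1 < q) (hn0 : 1 ≤ n 0) (hlac : ∀ j, (n (j + 1) : ℝ) ≥ q * n j) :
    ∀ j k, q ^ k * n j ≤ n (j + k) := by
  intro j k; induction k with
  | zero => simp
  | succ k ih =>
    have hq0 : (0:ℝ) ≤ q := by linarith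
    calc q ^ (k+1) * (n j : ℝ) = q * (q ^ k * n j) := by ring
    _ ≤ q * n (j + k) := by
        apply mul_le_mul_of_nonneg_left ih hq0
    _ ≤ n (j + k + 1) := hlac (j + k)

lemma lac_count (hq : 1 < q) (hn0 : 1 ≤ n 0) (hlac : ∀ j, (n (j + 1) : ℝ) ≥ q * n j)
    (m : ℕ) : ∃ C : ℕ, 0 < C ∧ ∀ (N : ℕ) (s : Finset ℕ),
      ((Fintype.piFinset (fun _ : Fin m => s)).filter (fun σ => ∑ i, n (σ i) = N)).card ≤ C := by
  induction m with
  | zero =>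
    refine ⟨1, one_pos, fun N s => ?_⟩
    calc ((Fintype.piFinset (fun _ : Fin 0 => s)).filter _).card
        ≤ (Fintype.piFinset (fun _ : Fin 0 => s)).card := Finset.card_filter_le _ _
    _ = 1 := by simp [Fintype.card_piFinset]
  | succ m IH =>
    obtain ⟨C, hC, hCle⟩ := IH
    obtain ⟨K, hK⟩ := pow_unbounded_of_one_lt ((m+1 : ℕ) : ℝ) hq
    refine ⟨(m+1) * K * C, ?_, fun N s => ?_⟩
    · have hK1 : 0 < K := by
        rcases Nat.eq_zero_or_pos K with h | h
        · rw [h, pow_zero] at hK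
          have : (1:ℝ) ≤ ((m+1:ℕ):ℝ) := by exact_mod_cast Nat.succ_le_succ (Nat.zero_le m)
          linarith
        · exact h
      positivity
    -- window
    set W : Finset ℕ := (Finset.range (N+1)).filter
      (fun j => n j ≤ N ∧ N ≤ (m+1) * n j) with hW
    have hWcard : W.card ≤ K := by
      rcases W.eq_empty_or_nonempty with h | h
      · simp [h]
        -- K ≥ 0 trivially; card_empty = 0
      · set a := W.min' h with ha
        have haW : a ∈ W := W.min'_mem h
        have hsub : W ⊆ Finset.Ico a (a + K) := by
          intro j hj
          rw [Finset.mem_Ico]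
          have haj : a ≤ j := W.min'_le j hj
          refine ⟨haj, ?_⟩
          by_contra hcon
          push_neg at hcon
          have hKle : K ≤ j - a := by omega
          -- get bounds from window membership
          simp only [hW, Finset.mem_filter] at hj haW
          obtain ⟨-, hjN, -⟩ := hj
          obtain ⟨-, -, hNa⟩ := haW
          have hgrow := lac_grow hq hn0 hlac a (j - a)
          rw [Nat.add_sub_cancel' haj] at hgrow
          have hna : (1:ℝ) ≤ (n a : ℝ) := by exact_mod_cast lac_pos hq hn0 hlac a
          have hqK : (q:ℝ) ^ K ≤ q ^ (j - a) := pow_le_pow_right₀ hq.le hKle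
          have c1 : ((n j : ℕ) : ℝ) ≤ (N : ℝ) := by exact_mod_cast hjN
          have c2 : (N : ℝ) ≤ ((m+1 : ℕ) : ℝ) * n a := by exact_mod_cast hNa
          have : (q:ℝ) ^ K * n a ≤ ((m+1:ℕ):ℝ) * n a := by
            calc (q:ℝ) ^ K * n a ≤ q ^ (j-a) * n a := by
                  apply mul_le_mul_of_nonneg_right hqK (by linarith)
            _ ≤ (n j : ℝ) := hgrow
            _ ≤ (N:ℝ) := c1
            _ ≤ _ := c2
          have : (q:ℝ) ^ K ≤ ((m+1:ℕ):ℝ) := by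
            have hna0 : (0:ℝ) < n a := by linarith
            exact le_of_mul_le_mul_right this hna0
          linarith
        calc W.card ≤ (Finset.Ico a (a+K)).card := Finset.card_le_card hsub
        _ = K := by rw [Nat.card_Ico]; omega
    set A : Finset (Fin (m+1) → ℕ) :=
      (Fintype.piFinset (fun _ : Fin (m+1) => s)).filter (fun σ => ∑ i, n (σ i) = N) with hA
    -- step 1 : A covered by argmax position
    have h1 : A ⊆ Finset.univ.biUnion
        (fun i : Fin (m+1) => A.filter (fun σ => ∀ i', n (σ i') ≤ n (σ i))) := by
      intro σ hσ
      obtain ⟨i, -, hi⟩ := Finset.exists_max_image Finset.univ (fun i => n (σ i))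
        ⟨0, Finset.mem_univ 0⟩
      exact Finset.mem_biUnion.2 ⟨i, Finset.mem_univ i,
        Finset.mem_filter.2 ⟨hσ, fun i' => hi i' (Finset.mem_univ i')⟩⟩
    have h2 : ∀ i : Fin (m+1),
        (A.filter (fun σ => ∀ i', n (σ i') ≤ n (σ i))).card ≤ K * C := by
      intro i
      set Ai := A.filter (fun σ => ∀ i', n (σ i') ≤ n (σ i)) with hAi
      have hsub : Ai ⊆ W.biUnion (fun j => Ai.filter (fun σ => σ i = j)) := by
        intro σ hσ
        refine Finset.mem_biUnion.2 ⟨σ i, ?_, Finset.mem_filter.2 ⟨hσ, rfl⟩⟩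
        simp only [hAi, hA, Finset.mem_filter] at hσ
        obtain ⟨⟨hpi, hsum⟩, hmax⟩ := hσ
        have hle : n (σ i) ≤ N := by
          rw [← hsum]
          exact Finset.single_le_sum (f := fun i' => n (σ i')) (fun i' _ => Nat.zero_le _) (Finset.mem_univ i)
        have hge : N ≤ (m+1) * n (σ i) := by
          rw [← hsum]
          calc ∑ i', n (σ i') ≤ ∑ _i' : Fin (m+1), n (σ i) :=
                Finset.sum_le_sum (fun i' _ => hmax i')
          _ = (m+1) * n (σ i) := by simp [Finset.sum_const, Finset.card_univ, mul_comm]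
        have hlt : σ i < N + 1 :=
          lt_of_lt_of_le (lac_gt hq hn0 hlac (σ i)) (Nat.le_succ_of_le hle)
        exact Finset.mem_filter.2 ⟨Finset.mem_range.2 hlt, hle, hge⟩
      have h3 : ∀ j ∈ W, (Ai.filter (fun σ => σ i = j)).card ≤ C := by
        intro j hjW
        have hinj : Set.InjOn (fun (σ : Fin (m+1) → ℕ) => i.removeNth σ)
            ↑(Ai.filter (fun σ => σ i = j)) := by
          intro σ hσ τ hτ he
          simp only [Finset.coe_filter, Set.mem_setOf_eq] at hσ hτ
          have he' : i.removeNth σ = i.removeNth τ := he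
          have : Fin.insertNth i (σ i) (i.removeNth σ) = Fin.insertNth i (τ i) (i.removeNth τ) := by
            rw [hσ.2, hτ.2, he']
          rwa [Fin.insertNth_self_removeNth, Fin.insertNth_self_removeNth] at this
        have hmaps : ∀ σ ∈ Ai.filter (fun σ => σ i = j),
            i.removeNth σ ∈ (Fintype.piFinset (fun _ : Fin m => s)).filter
              (fun σ' => ∑ k, n (σ' k) = N - n j) := by
          intro σ hσ
          simp only [Finset.mem_filter, hAi, hA] at hσ
          obtain ⟨⟨⟨hpi, hsum⟩, -⟩, hij⟩ := hσ
          rw [Fintype.mem_piFinset] at hpi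
          refine Finset.mem_filter.2 ⟨Fintype.mem_piFinset.2 (fun k => hpi _), ?_⟩
          have := Fin.sum_univ_succAbove (fun i' => n (σ i')) i
          rw [hij] at this
          rw [this] at hsum
          simp only [Fin.removeNth]
          omega
        calc (Ai.filter (fun σ => σ i = j)).card
            ≤ ((Fintype.piFinset (fun _ : Fin m => s)).filter
              (fun σ' => ∑ k, n (σ' k) = N - n j)).card :=
              Finset.card_le_card_of_injOn _ hmaps hinj
        _ ≤ C := hCle _ _
      calc Ai.card ≤ (W.biUnion (fun j => Ai.filter (fun σ => σ i = j))).card :=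
            Finset.card_le_card hsub
      _ ≤ ∑ j ∈ W, (Ai.filter (fun σ => σ i = j)).card := Finset.card_biUnion_le
      _ ≤ ∑ _j ∈ W, C := Finset.sum_le_sum h3
      _ = W.card * C := by rw [Finset.sum_const, smul_eq_mul]
      _ ≤ K * C := Nat.mul_le_mul_right C hWcard
    calc A.card ≤ (Finset.univ.biUnion
          (fun i : Fin (m+1) => A.filter (fun σ => ∀ i', n (σ i') ≤ n (σ i)))).card :=
          Finset.card_le_card h1
    _ ≤ ∑ i : Fin (m+1), (A.filter (fun σ => ∀ i', n (σ i') ≤ n (σ i))).card :=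
          Finset.card_biUnion_le
    _ ≤ ∑ _i : Fin (m+1), K * C := Finset.sum_le_sum (fun i _ => h2 i)
    _ = (m+1) * (K * C) := by simp [Finset.sum_const, Finset.card_univ]
    _ = (m+1) * K * C := by ring

end Counting

lemma cont_memLp (f : ℝ → ℝ) (hf : Continuous f) (r : ℝ≥0∞) :
    MemLp f r (volume.restrict (Set.Ioc (0:ℝ) 1)) := by
  obtain ⟨C, hC⟩ := isCompact_Icc.exists_bound_of_continuousOn
    (hf.continuousOn : ContinuousOn f (Set.Icc (0:ℝ) 1))
  have hbd : ∀ᵐ x ∂(volume.restrict (Set.Ioc (0:ℝ) 1)), ‖f x‖ ≤ C := by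
    rw [ae_restrict_iff' measurableSet_Ioc]
    exact ae_of_all _ fun x hx => hC x (Set.Ioc_subset_Icc_self hx)
  exact (memLp_top_of_bound hf.aestronglyMeasurable C hbd).mono_exponent le_top

lemma power_mean (X : ℝ → ℝ) (hX : Continuous X) (hX0 : ∀ t, 0 ≤ X t)
    {u v : ℝ} (hu : 0 < u) (huv : u ≤ v) :
    (∫ t in (0:ℝ)..1, X t ^ u) ≤ (∫ t in (0:ℝ)..1, X t ^ v) ^ (u/v) := by
  have hv : 0 < v := lt_of_lt_of_le hu huv
  rcases eq_or_lt_of_le huv with h | h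
  · subst h
    rw [div_self (ne_of_gt hu), Real.rpow_one]
  · set r := v / u with hr
    have hr1 : 1 < r := (one_lt_div hu).2 h
    have hpq : Real.HolderConjugate r (r / (r - 1)) := (Real.holderConjugate_iff_eq_conjExponent hr1).2 rfl
    have hXu : Continuous (fun t => X t ^ u) :=
      hX.rpow_const (fun x => Or.inr hu.le)
    have key := integral_mul_le_Lp_mul_Lq_of_nonneg (μ := volume.restrict (Set.Ioc (0:ℝ) 1))
      hpq (f := fun t => X t ^ u) (g := fun _ => (1:ℝ))
      (ae_of_all _ fun t => Real.rpow_nonneg (hX0 t) u)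
      (ae_of_all _ fun _ => zero_le_one)
      (cont_memLp _ hXu _) (memLp_const 1)
    simp only [mul_one] at key
    have hur : u * r = v := by rw [hr]; field_simp
    have h1 : (∫ a in Set.Ioc (0:ℝ) 1, ((X a ^ u) ^ r) ∂volume)
        = ∫ a in Set.Ioc (0:ℝ) 1, X a ^ v ∂volume := by
      refine integral_congr_ae (ae_of_all _ fun a => ?_)
      show (X a ^ u) ^ r = X a ^ v
      rw [← Real.rpow_mul (hX0 a), hur]
    have h2 : (∫ _a in Set.Ioc (0:ℝ) 1, ((1:ℝ) ^ (r/(r-1))) ∂volume) = 1 := by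
      simp [Real.volume_Ioc]
    rw [h1, h2] at key
    rw [Real.one_rpow, mul_one] at key
    have h3 : 1 / r = u / v := by rw [hr]; field_simp [one_div]
    rw [h3] at key
    rw [intervalIntegral.integral_of_le zero_le_one, intervalIntegral.integral_of_le zero_le_one]
    exact key
theorem stmt_10 (q : ℝ) (hq : 1 < q) (n : ℕ → ℕ) (hn0 : 1 ≤ n 0)
    (hlac : ∀ j, (n (j + 1) : ℝ) ≥ q * n j)
    (p : ℝ) (hp : 1 ≤ p) :
    ∃ A B : ℝ, 0 < A ∧ 0 < B ∧
      ∀ (s : Finset ℕ) (c : ℕ → ℂ),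
        A * (∑ j ∈ s, ‖c j‖ ^ 2) ^ ((1 : ℝ) / 2)
          ≤ (∫ t in (0 : ℝ)..1,
              ‖∑ j ∈ s, c j * Complex.exp (2 * π * Complex.I * (n j : ℂ) * t)‖ ^ p)
            ^ (1 / p) ∧
        (∫ t in (0 : ℝ)..1,
            ‖∑ j ∈ s, c j * Complex.exp (2 * π * Complex.I * (n j : ℂ) * t)‖ ^ p)
          ^ (1 / p)
          ≤ B * (∑ j ∈ s, ‖c j‖ ^ 2) ^ ((1 : ℝ) / 2) := by
  classical
  have hp0 : 0 < p := lt_of_lt_of_le one_pos hp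
  set m : ℕ := ⌈p⌉₊ + 1 with hm
  obtain ⟨Cm, hCmpos, hCmfib⟩ := lac_count hq hn0 hlac m
  obtain ⟨C4, hC4pos, hC4fib⟩ := lac_count hq hn0 hlac 2
  set D : ℝ := (C4 : ℝ) with hDdef
  have hDpos : (0:ℝ) < D := by rw [hDdef]; exact Nat.cast_pos.mpr hC4pos
  refine ⟨min 1 (D ^ (-((2-p)/(2*p)))), (Cm:ℝ) ^ (1/(2*(m:ℝ))),
    lt_min one_pos (Real.rpow_pos_of_pos hDpos _),
    Real.rpow_pos_of_pos (by exact_mod_cast hCmpos) _, ?_⟩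
  intro s c
  set F : ℝ → ℂ := fun t => ∑ j ∈ s, c j * LacE (n j) t with hF
  have hFc : Continuous F := continuous_finset_sum _ fun j _ => continuous_const.mul (lacE_cont _)
  set X : ℝ → ℝ := fun t => ‖F t‖ with hXdef
  have hXc : Continuous X := hFc.norm
  have hX0 : ∀ t, 0 ≤ X t := fun t => norm_nonneg _
  set S : ℝ := ∑ j ∈ s, ‖c j‖^2 with hS
  have hS0 : 0 ≤ S := Finset.sum_nonneg fun j _ => sq_nonneg _
  have hinj : Set.InjOn n ↑s := ((lac_mono hq hn0 hlac).injective).injOn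
  have hI2 : (∫ t in (0:ℝ)..1, X t ^ (2:ℕ)) = S := lacE_L2 s n hinj c
  have hrw : ∀ (k : ℕ), (∫ t in (0:ℝ)..1, X t ^ ((k:ℕ):ℝ)) = ∫ t in (0:ℝ)..1, X t ^ (k:ℕ) := by
    intro k
    refine intervalIntegral.integral_congr (fun t _ => ?_)
    exact Real.rpow_natCast _ k
  set Ip : ℝ := ∫ t in (0:ℝ)..1, X t ^ p with hIpdef
  have hIp0 : 0 ≤ Ip :=
    intervalIntegral.integral_nonneg zero_le_one (fun t _ => Real.rpow_nonneg (hX0 t) p)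
  have hgoal : (∫ t in (0 : ℝ)..1,
      ‖∑ j ∈ s, c j * Complex.exp (2 * π * Complex.I * (n j : ℂ) * t)‖ ^ p) = Ip := rfl
  rw [hgoal]
  have hm0 : (0:ℝ) < (m:ℝ) := by
    have : 0 < m := Nat.succ_pos _
    exact_mod_cast this
  -- upper bound
  have h2m : p ≤ 2*(m:ℝ) := by
    have h1 : p ≤ (⌈p⌉₊ : ℝ) := Nat.le_ceil p
    have h2 : ((⌈p⌉₊ : ℕ):ℝ) ≤ (m:ℝ) := by exact_mod_cast Nat.le_succ _
    nlinarith
  have hup2m : (∫ t in (0:ℝ)..1, X t ^ (2*(m:ℝ))) ≤ (Cm:ℝ) * S^m := by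
    have hcast : (2*(m:ℝ)) = ((2*m : ℕ):ℝ) := by push_cast; ring
    rw [hcast, hrw (2*m)]
    have hpt : ∀ t ∈ Set.uIcc (0:ℝ) 1, X t ^ (2*m:ℕ) = ‖(F t)^m‖^2 := by
      intro t _
      rw [norm_pow, ← pow_mul, mul_comm 2 m]
    rw [intervalIntegral.integral_congr hpt]
    exact lacE_L2m n m Cm hCmfib s c
  have hup : Ip ≤ ((Cm:ℝ) * S^m) ^ (p/(2*(m:ℝ))) := by
    refine le_trans (power_mean X hXc hX0 hp0 h2m) (Real.rpow_le_rpow ?_ hup2m (by positivity))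
    exact intervalIntegral.integral_nonneg zero_le_one (fun t _ => Real.rpow_nonneg (hX0 t) _)
  have hCm0 : (0:ℝ) < (Cm:ℝ) := by exact_mod_cast hCmpos
  have hupf : Ip ^ (1/p) ≤ (Cm:ℝ)^(1/(2*(m:ℝ))) * S^((1:ℝ)/2) := by
    have h1 : Ip^(1/p) ≤ (((Cm:ℝ) * S^m) ^ (p/(2*(m:ℝ))))^(1/p) :=
      Real.rpow_le_rpow hIp0 hup (by positivity)
    refine le_trans h1 (le_of_eq ?_)
    rw [← Real.rpow_mul (by positivity)]
    have he : (p/(2*(m:ℝ)))*(1/p) = 1/(2*(m:ℝ)) := by field_simp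
    rw [he, Real.mul_rpow (by positivity) (by positivity)]
    congr 1
    rw [← Real.rpow_natCast S m, ← Real.rpow_mul hS0]
    congr 1
    field_simp
  refine ⟨?_, hupf⟩
  -- lower bound
  rcases eq_or_lt_of_le hS0 with hSz | hSpos
  · rw [← hSz, Real.zero_rpow (by norm_num : (1:ℝ)/2 ≠ 0), mul_zero]
    exact Real.rpow_nonneg hIp0 _
  · by_cases hp2 : 2 ≤ p
    · have hS2 : S ≤ Ip^(2/p) := by
        have h := power_mean X hXc hX0 (by norm_num : (0:ℝ) < 2) hp2
        rwa [show ((2:ℝ)) = ((2:ℕ):ℝ) by norm_num, hrw 2, hI2] at h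
      have h1 : S^((1:ℝ)/2) ≤ (Ip^(2/p))^((1:ℝ)/2) := Real.rpow_le_rpow hS0 hS2 (by norm_num)
      have h2 : (Ip^(2/p))^((1:ℝ)/2) = Ip^(1/p) := by
        rw [← Real.rpow_mul hIp0]
        congr 1
        field_simp
      calc min 1 (D ^ (-((2-p)/(2*p)))) * S^((1:ℝ)/2)
          ≤ 1 * S^((1:ℝ)/2) :=
            mul_le_mul_of_nonneg_right (min_le_left _ _) (Real.rpow_nonneg hS0 _)
      _ = S^((1:ℝ)/2) := one_mul _
      _ ≤ Ip^(1/p) := h2 ▸ h1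
    · push_neg at hp2
      set α : ℝ := 2/(4-p) with hα
      have h4p : 0 < 4 - p := by linarith
      have hα0 : 0 < α := by positivity
      have hα1 : α < 1 := by rw [hα, div_lt_one h4p]; linarith
      have h1α : 0 < 1 - α := by linarith
      have hpq : Real.HolderConjugate (1/α) (1/(1-α)) := by
        constructor
        · rw [one_div, one_div, inv_inv, inv_inv, inv_one]; ring
        · positivity
        · positivity
      have hfc : Continuous (fun t => X t ^ (α*p)) :=
        hXc.rpow_const (fun x => Or.inr (by positivity))
      have hgc : Continuous (fun t => X t ^ (4*(1-α))) :=
        hXc.rpow_const (fun x => Or.inr (by positivity))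
      have key := integral_mul_le_Lp_mul_Lq_of_nonneg (μ := volume.restrict (Set.Ioc (0:ℝ) 1))
        hpq (f := fun t => X t ^ (α*p)) (g := fun t => X t ^ (4*(1-α)))
        (ae_of_all _ fun t => Real.rpow_nonneg (hX0 t) _)
        (ae_of_all _ fun t => Real.rpow_nonneg (hX0 t) _)
        (cont_memLp _ hfc _) (cont_memLp _ hgc _)
      have hsum : α*p + 4*(1-α) = 2 := by
        rw [hα]; field_simp; ring
      have hL : (∫ a in Set.Ioc (0:ℝ) 1, (X a ^ (α*p)) * (X a ^ (4*(1-α))) ∂volume) = S := by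
        have hpt : ∀ a : ℝ, (X a ^ (α*p)) * (X a ^ (4*(1-α))) = X a ^ (2:ℕ) := by
          intro a
          rw [← Real.rpow_add' (hX0 a) (by rw [hsum]; norm_num), hsum,
            show ((2:ℝ)) = ((2:ℕ):ℝ) by norm_num, Real.rpow_natCast]
        rw [integral_congr_ae (ae_of_all _ fun a => hpt a)]
        rw [← intervalIntegral.integral_of_le zero_le_one, hI2]
      have hRf : (∫ a in Set.Ioc (0:ℝ) 1, (X a ^ (α*p)) ^ (1/α) ∂volume) = Ip := by
        have hpt : ∀ a : ℝ, (X a ^ (α*p)) ^ (1/α) = X a ^ p := by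
          intro a
          rw [← Real.rpow_mul (hX0 a)]
          congr 1
          field_simp
        rw [integral_congr_ae (ae_of_all _ fun a => hpt a)]
        rw [← intervalIntegral.integral_of_le zero_le_one]
      have hRg : (∫ a in Set.Ioc (0:ℝ) 1, (X a ^ (4*(1-α))) ^ (1/(1-α)) ∂volume)
          = ∫ t in (0:ℝ)..1, X t ^ (4:ℕ) := by
        have hpt : ∀ a : ℝ, (X a ^ (4*(1-α))) ^ (1/(1-α)) = X a ^ (4:ℕ) := by
          intro a
          rw [← Real.rpow_mul (hX0 a), show (4*(1-α))*(1/(1-α)) = 4 by field_simp,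
            show ((4:ℝ)) = ((4:ℕ):ℝ) by norm_num, Real.rpow_natCast]
        rw [integral_congr_ae (ae_of_all _ fun a => hpt a)]
        rw [← intervalIntegral.integral_of_le zero_le_one]
      rw [hL, hRf, hRg, one_div_one_div, one_div_one_div] at key
      -- bound on fourth moment
      set I4 : ℝ := ∫ t in (0:ℝ)..1, X t ^ (4:ℕ) with hI4def
      have hI40 : 0 ≤ I4 :=
        intervalIntegral.integral_nonneg zero_le_one (fun t _ => by positivity)
      have hI4 : I4 ≤ D * S^2 := by
        have hpt : ∀ t ∈ Set.uIcc (0:ℝ) 1, X t ^ (4:ℕ) = ‖(F t)^2‖^2 := by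
          intro t _
          rw [norm_pow, ← pow_mul]
        rw [hI4def, intervalIntegral.integral_congr hpt]
        exact lacE_L2m n 2 C4 hC4fib s c
      have key2 : S ≤ Ip^α * (D*S^2)^(1-α) := by
        refine le_trans key (mul_le_mul_of_nonneg_left ?_ (Real.rpow_nonneg hIp0 _))
        exact Real.rpow_le_rpow hI40 hI4 h1α.le
      have hDS2 : (0:ℝ) < D * S^2 := by positivity
      set K : ℝ := (D*S^2)^(1-α) with hKdef
      have hKpos : 0 < K := Real.rpow_pos_of_pos hDS2 _
      have h6 : S / K ≤ Ip^α := (div_le_iff₀ hKpos).2 key2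
      have h7 : (S/K)^(1/α) ≤ Ip := by
        have h := Real.rpow_le_rpow (by positivity) h6 (by positivity : (0:ℝ) ≤ 1/α)
        rwa [← Real.rpow_mul hIp0, mul_one_div, div_self hα0.ne', Real.rpow_one] at h
      have hcalc : (S/K)^(1/α) = D^(-((2-p)/2)) * S^(p/2) := by
        have e1 : (1-α)*(1/α) = (2-p)/2 := by rw [hα]; field_simp; ring
        rw [hKdef, Real.div_rpow hS0 (Real.rpow_nonneg hDS2.le _),
          ← Real.rpow_mul hDS2.le, e1,
          Real.mul_rpow hDpos.le (by positivity : (0:ℝ) ≤ S^2),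
          ← Real.rpow_natCast S 2, ← Real.rpow_mul hS0,
          show ((2:ℕ):ℝ)*((2-p)/2) = 2-p by push_cast; ring,
          show (1:ℝ)/α = (4-p)/2 by rw [hα, one_div_div]]
        have hsplit : S^((4-p)/2) = S^(p/2) * S^(2-p) := by
          rw [← Real.rpow_add hSpos]; congr 1; ring
        rw [hsplit, Real.rpow_neg hDpos.le]
        have hSne : S^(2-p) ≠ 0 := (Real.rpow_pos_of_pos hSpos _).ne'
        have hDne : D^((2-p)/2) ≠ 0 := (Real.rpow_pos_of_pos hDpos _).ne'
        field_simp
      rw [hcalc] at h7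
      have h8 : (D^(-((2-p)/2)) * S^(p/2))^(1/p) ≤ Ip^(1/p) :=
        Real.rpow_le_rpow (by positivity) h7 (by positivity)
      have h9 : (D^(-((2-p)/2)) * S^(p/2))^(1/p) = D^(-((2-p)/(2*p))) * S^((1:ℝ)/2) := by
        rw [Real.mul_rpow (Real.rpow_nonneg hDpos.le _) (Real.rpow_nonneg hS0 _),
          ← Real.rpow_mul hDpos.le, ← Real.rpow_mul hS0]
        congr 1
        · congr 1
          field_simp
        · congr 1
          field_simp
      rw [h9] at h8
      refine le_trans ?_ h8
      exact mul_le_mul_of_nonneg_right (min_le_right _ _) (Real.rpow_nonneg hS0 _)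
end

section
/- Let $I$ be a finite set of integers with $|I| \ge 8$. Then there exist positive integers $q$ and $s$ such that $\frac{|I|^{1/3}}{8} \le |I(q;s)| \le q^{1/2}$, where $I(q;s) = \{k \in I : k \equiv s \pmod q\}$. -/
open Finset

lemma aux_rpow (a : ℝ) (ha : 0 ≤ a) (m : ℕ) (hm : 0 < m) :
    (a ^ m : ℝ) ^ ((1:ℝ)/m) = a := by
  rw [← Real.rpow_natCast a m, ← Real.rpow_mul ha,
    mul_one_div_cancel (by exact_mod_cast hm.ne' : (m:ℝ) ≠ 0), Real.rpow_one]

-- splitting lemma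
lemma aux_split (I : Finset ℤ) (m : ℕ) (z : ℤ) :
    (I.filter fun k => k % ((4:ℤ)^m) = z % (4:ℤ)^m).card ≤
      ∑ t ∈ Finset.range 4,
        (I.filter fun k => k % ((4:ℤ)^(m+1)) = (z % (4:ℤ)^m + (t:ℤ) * (4:ℤ)^m) % (4:ℤ)^(m+1)).card := by
  set q : ℤ := (4:ℤ)^m with hqdef
  have hq : 0 < q := by positivity
  have h4q : ((4:ℤ)^(m+1)) = 4 * q := by rw [hqdef]; ring
  have hsub : (I.filter fun k => k % q = z % q) ⊆
      (Finset.range 4).biUnion (fun t =>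
        I.filter fun k => k % ((4:ℤ)^(m+1)) = (z % q + (t:ℤ) * q) % (4:ℤ)^(m+1)) := by
    intro k hk
    obtain ⟨hkI, hkmod⟩ := Finset.mem_filter.1 hk
    set r : ℤ := k % (4 * q) with hrdef
    have hr0 : 0 ≤ r := Int.emod_nonneg _ (by positivity)
    have hr4 : r < 4 * q := Int.emod_lt_of_pos _ (by positivity)
    have hrq : r % q = z % q := by
      rw [hrdef, Int.emod_emod_of_dvd _ ⟨4, by ring⟩, hkmod]
    have htlt : r / q < 4 := by
      rw [Int.ediv_lt_iff_lt_mul hq]; linarith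
    have ht0 : 0 ≤ r / q := Int.ediv_nonneg hr0 hq.le
    refine Finset.mem_biUnion.2 ⟨(r / q).toNat, Finset.mem_range.2 (by omega), ?_⟩
    refine Finset.mem_filter.2 ⟨hkI, ?_⟩
    have hcast : ((r / q).toNat : ℤ) = r / q := Int.toNat_of_nonneg ht0
    have hval : z % q + ((r / q).toNat : ℤ) * q = r := by
      rw [hcast, ← hrq]
      have h := Int.emod_add_mul_ediv r q
      linarith [Int.emod_add_mul_ediv r q]
    rw [h4q, hval, Int.emod_emod_of_dvd _ dvd_rfl]
  calc (I.filter fun k => k % q = z % q).card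
      ≤ _ := Finset.card_le_card hsub
    _ ≤ _ := Finset.card_biUnion_le

theorem stmt_14 (I : Finset ℤ) (hI : 8 ≤ I.card) :
    ∃ q s : ℕ, 0 < q ∧ 0 < s ∧
      ((I.card : ℝ) ^ ((1 : ℝ) / 3)) / 8
          ≤ ((I.filter fun k => k % (q : ℤ) = (s : ℤ) % (q : ℤ)).card : ℝ) ∧
      ((I.filter fun k => k % (q : ℤ) = (s : ℤ) % (q : ℤ)).card : ℝ)
          ≤ (q : ℝ) ^ ((1 : ℝ) / 2) := by
  classical
  set n := I.card with hn
  set P : ℕ → Prop := fun j =>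
    ∀ z : ℤ, (I.filter fun k => k % ((4:ℤ)^j) = z % (4:ℤ)^j).card ≤ 2^j with hP
  have hPex : ∃ j, P j := by
    refine ⟨n, fun z => ?_⟩
    exact le_trans (Finset.card_filter_le _ _) (Nat.lt_two_pow_self (n := n)).le
  set J := Nat.find hPex with hJdef
  have hj : P J := Nat.find_spec hPex
  have hJ0 : J ≠ 0 := by
    intro h0
    have := hj 0
    rw [h0] at this
    have heq : (I.filter fun k => k % ((4:ℤ)^0) = 0 % (4:ℤ)^0) = I := by
      apply Finset.filter_true_of_mem
      intro x _
      simp [Int.emod_one]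
    rw [heq] at this
    omega
  obtain ⟨j', hJeq⟩ : ∃ j', J = j' + 1 := ⟨J - 1, by omega⟩
  have hmin : ¬ P j' := Nat.find_min hPex (by omega)
  rw [hP] at hmin
  simp only [not_forall, not_le] at hmin
  obtain ⟨z, hz⟩ := hmin
  rw [hJeq] at hj
  -- find the big subclass mod 4^(j'+1)
  set c : ℕ → ℕ := fun t =>
    (I.filter fun k => k % ((4:ℤ)^(j'+1)) = (z % (4:ℤ)^j' + (t:ℤ) * (4:ℤ)^j') % (4:ℤ)^(j'+1)).card
    with hc
  obtain ⟨t, htmem, htmax⟩ := Finset.exists_max_image (Finset.range 4) c ⟨0, by simp⟩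
  have hsum : 2^j' < ∑ t ∈ Finset.range 4, c t :=
    lt_of_lt_of_le hz (aux_split I j' z)
  have hsum4 : ∑ t ∈ Finset.range 4, c t ≤ 4 * c t := by
    calc ∑ i ∈ Finset.range 4, c i ≤ ∑ _i ∈ Finset.range 4, c t :=
          Finset.sum_le_sum (fun i hi => htmax i hi)
      _ = 4 * c t := by simp [Finset.sum_const]
  have hbig : 2^j' < 4 * c t := lt_of_lt_of_le hsum hsum4
  set z' : ℤ := z % (4:ℤ)^j' + (t:ℤ) * (4:ℤ)^j' with hz'
  have hz'0 : 0 ≤ z' := by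
    have := Int.emod_nonneg z (show ((4:ℤ)^j') ≠ 0 by positivity)
    have ht0 : (0:ℤ) ≤ (t:ℤ) := by positivity
    have : (0:ℤ) ≤ (t:ℤ) * (4:ℤ)^j' := by positivity
    omega
  set sN : ℕ := if z' = 0 then 4^(j'+1) else z'.toNat with hsN
  have hsNpos : 0 < sN := by
    rw [hsN]
    split
    · positivity
    · omega
  have hsNmod : (sN : ℤ) % (4:ℤ)^(j'+1) = z' % (4:ℤ)^(j'+1) := by
    rw [hsN]
    split
    · rename_i h
      rw [h]
      push_cast
      simp
    · rw [Int.toNat_of_nonneg hz'0]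
  -- filter rewriting
  have hcq : ((4^(j'+1):ℕ) : ℤ) = (4:ℤ)^(j'+1) := by push_cast; ring
  have hfe : (I.filter fun k => k % ((4^(j'+1):ℕ) : ℤ) = (sN:ℤ) % ((4^(j'+1):ℕ):ℤ)).card = c t := by
    apply congrArg Finset.card
    apply Finset.filter_congr
    intro k _
    rw [hcq, hsNmod, hz']
  -- counting: n ≤ 8^(j'+1)
  have hcover : I ⊆ (Finset.range (4^(j'+1))).biUnion (fun y =>
      I.filter fun k => k % ((4:ℤ)^(j'+1)) = (y:ℤ) % (4:ℤ)^(j'+1)) := by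
    intro k hk
    have hQpos : (0:ℤ) < (4:ℤ)^(j'+1) := by positivity
    have h1 : 0 ≤ k % (4:ℤ)^(j'+1) := Int.emod_nonneg _ hQpos.ne'
    have h2 : k % (4:ℤ)^(j'+1) < (4:ℤ)^(j'+1) := Int.emod_lt_of_pos _ hQpos
    have hcq : ((4^(j'+1):ℕ) : ℤ) = (4:ℤ)^(j'+1) := by push_cast; ring
    refine Finset.mem_biUnion.2 ⟨(k % (4:ℤ)^(j'+1)).toNat, Finset.mem_range.2 (by omega), ?_⟩
    refine Finset.mem_filter.2 ⟨hk, ?_⟩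
    rw [Int.toNat_of_nonneg h1, Int.emod_emod_of_dvd _ dvd_rfl]
  have hn8 : n ≤ 8^(j'+1) := by
    calc n = I.card := hn
      _ ≤ _ := Finset.card_le_card hcover
      _ ≤ ∑ y ∈ Finset.range (4^(j'+1)),
            (I.filter fun k => k % ((4:ℤ)^(j'+1)) = (y:ℤ) % (4:ℤ)^(j'+1)).card :=
          Finset.card_biUnion_le
      _ ≤ ∑ _y ∈ Finset.range (4^(j'+1)), 2^(j'+1) :=
          Finset.sum_le_sum (fun y _ => hj (y:ℤ))
      _ = 4^(j'+1) * 2^(j'+1) := by simp [Finset.sum_const]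
      _ = 8^(j'+1) := by rw [← mul_pow]; norm_num
  have hctle : c t ≤ 2^(j'+1) := hj z'
  refine ⟨4^(j'+1), sN, by positivity, hsNpos, ?_, ?_⟩
  · rw [hfe]
    have h1 : (n:ℝ) ≤ (8:ℝ)^(j'+1) := by exact_mod_cast hn8
    have h2 : ((n:ℝ))^((1:ℝ)/3) ≤ (2:ℝ)^(j'+1) := by
      have h3 := Real.rpow_le_rpow (by positivity) h1 (by norm_num : (0:ℝ) ≤ 1/3)
      have h8 : ((8:ℝ)^(j'+1)) = ((2:ℝ)^(j'+1))^(3:ℕ) := by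
        rw [← pow_mul, mul_comm]
        norm_num [pow_mul]
      rw [h8] at h3
      have := aux_rpow ((2:ℝ)^(j'+1)) (by positivity) 3 (by norm_num)
      rw [show ((3:ℕ):ℝ) = (3:ℝ) by norm_num] at this
      rwa [this] at h3
    have h4 : (2:ℝ)^(j'+1) ≤ 8 * (c t : ℝ) := by
      have : (2:ℕ)^(j'+1) ≤ 8 * c t := by
        have hp : (2:ℕ)^(j'+1) = 2 * 2^j' := by ring
        omega
      exact_mod_cast this
    rw [div_le_iff₀ (by norm_num : (0:ℝ) < 8)]
    calc ((n:ℝ))^((1:ℝ)/3) ≤ (2:ℝ)^(j'+1) := h2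
      _ ≤ 8 * (c t : ℝ) := h4
      _ = (c t : ℝ) * 8 := by ring
  · rw [hfe]
    have hq2 : ((4^(j'+1):ℕ) : ℝ) = ((2:ℝ)^(j'+1))^(2:ℕ) := by
      push_cast
      rw [← pow_mul, mul_comm, pow_mul]
      norm_num
    rw [hq2]
    have := aux_rpow ((2:ℝ)^(j'+1)) (by positivity) 2 (by norm_num)
    rw [show ((2:ℕ):ℝ) = (2:ℝ) by norm_num] at this
    rw [this]
    exact_mod_cast hctle
end
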